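/- arXiv:0911.5615 — 9 statements merged into one kernel-verified Lean document; each statement's English description precedes it below -/
import Mathlib

section
/- For every integer k ≥ 2 and every n ≥ 0, the number of equivalence classes of the k-recoil equivalence ≡_k on the symmetric group S_n equals n! if n ≤ k, and equals k!·k^(n−k) if n ≥ k. -/
/-- The `k`-recoil equivalence `≡_k` on `Equiv.Perm (Fin n)`.
Values are 0-indexed: `a : Fin n` represents the value `a+1` of the paper.
`σ ≡_k τ` iff for all values `a < b` with `b - a < k`,
`σ⁻¹(a) < σ⁻¹(b) ↔ τ⁻¹(a) < τ⁻¹(b)`. -/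
def recoilEquiv (k n : ℕ) (σ τ : Equiv.Perm (Fin n)) : Prop :=
  ∀ a b : Fin n, (a : ℕ) < b → (b : ℕ) - a < k →
    (σ.symm a < σ.symm b ↔ τ.symm a < τ.symm b)

/-- The inversion set of a permutation: pairs of values `a < b` that appear
in the order `… b … a …` in the one-line word of `σ`. -/
def invSet {n : ℕ} (σ : Equiv.Perm (Fin n)) : Set (Fin n × Fin n) :=
  {p | p.1 < p.2 ∧ σ.symm p.2 < σ.symm p.1}

/-- The extension `σ̃ : ℤ → ℤ` of `σ ∈ S_n` (1-indexed) fixing all `i ∉ [1, n]`. -/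
def extPerm {n : ℕ} (σ : Equiv.Perm (Fin n)) : ℤ → ℤ := fun i =>
  if h : 0 < i ∧ i ≤ (n : ℤ) then ((σ ⟨(i - 1).toNat, by omega⟩ : Fin n) : ℤ) + 1 else i

/-- The `k`-descent code: `DC k σ ℓ` is `d_{ℓ+1}` of the paper, the rank of
`σ̃(ℓ+1)` among the `k` entries `σ̃(ℓ+1-k+1), …, σ̃(ℓ+1)` (positions 1-indexed). -/
noncomputable def DC (k : ℕ) {n : ℕ} (σ : Equiv.Perm (Fin n)) : Fin n → ℕ := fun ℓ =>
  ((Finset.Icc ((ℓ : ℤ) + 1 - k + 1) ((ℓ : ℤ) + 1)).filter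
    (fun j => extPerm σ j ≤ extPerm σ ((ℓ : ℤ) + 1))).card

/-- `σ` is `k`-minimal: no index `i` with `σ(i) - σ(i+1) ≥ k`. -/
def kMinimal (k : ℕ) {n : ℕ} (σ : Equiv.Perm (Fin n)) : Prop :=
  ¬ ∃ (i : ℕ) (h : i + 1 < n),
      (σ ⟨i + 1, h⟩ : ℕ) + k ≤ (σ ⟨i, Nat.lt_of_succ_lt h⟩ : ℕ)

/-- `σ` is `k`-maximal: no index `i` with `σ(i+1) - σ(i) ≥ k`. -/
def kMaximal (k : ℕ) {n : ℕ} (σ : Equiv.Perm (Fin n)) : Prop :=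
  ¬ ∃ (i : ℕ) (h : i + 1 < n),
      (σ ⟨i, Nat.lt_of_succ_lt h⟩ : ℕ) + k ≤ (σ ⟨i + 1, h⟩ : ℕ)

/-- Shifted concatenation `σ • τ` of two permutations. -/
def shiftConcat {m n : ℕ} (σ : Equiv.Perm (Fin m)) (τ : Equiv.Perm (Fin n)) :
    Equiv.Perm (Fin (m + n)) :=
  finSumFinEquiv.symm.trans ((Equiv.sumCongr σ τ).trans finSumFinEquiv)

/-- `π` is `•`-indecomposable: no proper prefix of positions maps onto
a prefix of values. -/
def indecomposable {n : ℕ} (π : Equiv.Perm (Fin n)) : Prop :=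
  ¬ ∃ m : ℕ, 0 < m ∧ m < n ∧ ∀ i : Fin n, (i : ℕ) < m → (π i : ℕ) < m

/-- The setoid given by the `k`-recoil equivalence. -/
def recoilSetoid (k n : ℕ) : Setoid (Equiv.Perm (Fin n)) where
  r := recoilEquiv k n
  iseqv := ⟨fun _ _ _ _ _ => Iff.rfl,
            fun h a b hab hbk => (h a b hab hbk).symm,
            fun h₁ h₂ a b hab hbk => (h₁ a b hab hbk).trans (h₂ a b hab hbk)⟩


open Finset

namespace RecoilAux

/-- The k-code of a permutation at value v. -/
def code (k : ℕ) {n : ℕ} (σ : Equiv.Perm (Fin n)) (v : Fin n) : ℕ :=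
  (Finset.univ.filter (fun u : Fin n =>
    (u : ℕ) < (v : ℕ) ∧ (v : ℕ) - (u : ℕ) < k ∧ σ.symm u < σ.symm v)).card

lemma code_lt {k n : ℕ} (hk : 1 ≤ k) (σ : Equiv.Perm (Fin n)) (v : Fin n) :
    code k σ v < min ((v : ℕ) + 1) k := by
  unfold code
  have h1 : (Finset.univ.filter (fun u : Fin n =>
      (u : ℕ) < (v : ℕ) ∧ (v : ℕ) - (u : ℕ) < k ∧ σ.symm u < σ.symm v)).card ≤ (v : ℕ) := by
    refine le_trans (Finset.card_le_card_of_injOn (fun u => (u : ℕ)) ?_ ?_ (t := Finset.range v)) (by simp)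
    · intro u hu
      simp only [Finset.mem_coe, Finset.mem_filter] at hu
      simpa using hu.2.1
    · intro u _ u' _ h
      exact Fin.ext h
  have h2 : (Finset.univ.filter (fun u : Fin n =>
      (u : ℕ) < (v : ℕ) ∧ (v : ℕ) - (u : ℕ) < k ∧ σ.symm u < σ.symm v)).card ≤ k - 1 := by
    refine le_trans (Finset.card_le_card_of_injOn (fun u => (v : ℕ) - 1 - (u : ℕ)) ?_ ?_
      (t := Finset.range (k - 1))) (by simp)
    · intro u hu
      simp only [Finset.mem_coe, Finset.mem_filter] at hu
      simp only [Finset.mem_coe, Finset.mem_range]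
      omega
    · intro u hu u' hu' h
      simp only [Finset.mem_coe, Finset.mem_filter] at hu hu'
      dsimp only at h
      exact Fin.ext (by omega)
  omega

lemma code_eq_of_recoil {k n : ℕ} {σ τ : Equiv.Perm (Fin n)}
    (h : recoilEquiv k n σ τ) (v : Fin n) : code k σ v = code k τ v := by
  unfold code
  congr 1
  apply Finset.filter_congr
  intro u _
  constructor
  · rintro ⟨h1, h2, h3⟩; exact ⟨h1, h2, (h u v h1 h2).mp h3⟩
  · rintro ⟨h1, h2, h3⟩; exact ⟨h1, h2, (h u v h1 h2).mpr h3⟩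

lemma recoil_of_code_eq {k n : ℕ} {σ τ : Equiv.Perm (Fin n)}
    (h : ∀ v, code k σ v = code k τ v) : recoilEquiv k n σ τ := by
  suffices H : ∀ N, ∀ a b : Fin n, (b : ℕ) ≤ N → (a : ℕ) < b → (b : ℕ) - a < k →
      (σ.symm a < σ.symm b ↔ τ.symm a < τ.symm b) by
    intro a b hab hbk; exact H b a b le_rfl hab hbk
  intro N
  induction N using Nat.strong_induction_on with
  | _ N IH =>
  intro a b hbN hab hbk
  -- bits among window elements
  have bits : ∀ u x : Fin n, (u : ℕ) < b → (b : ℕ) - u < k → (x : ℕ) < b →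
      (b : ℕ) - x < k → u ≠ x → (σ.symm u < σ.symm x ↔ τ.symm u < τ.symm x) := by
    intro u x hu hu' hx hx' hne
    rcases lt_trichotomy (u : ℕ) (x : ℕ) with h1 | h1 | h1
    · exact IH x (by omega) u x le_rfl h1 (by omega)
    · exact absurd (Fin.ext h1) hne
    · have key := IH u (by omega) x u le_rfl h1 (by omega)
      have hσ : σ.symm u ≠ σ.symm x := fun hh => hne (σ.symm.injective hh)
      have hτ : τ.symm u ≠ τ.symm x := fun hh => hne (τ.symm.injective hh)
      constructor
      · intro hlt
        rcases hτ.lt_or_gt with h2 | h2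
        · exact h2
        · exact absurd (key.mpr h2) (asymm hlt)
      · intro hlt
        rcases hσ.lt_or_gt with h2 | h2
        · exact h2
        · exact absurd (key.mp h2) (asymm hlt)
  set W : Finset (Fin n) :=
    Finset.univ.filter (fun u : Fin n => (u : ℕ) < b ∧ (b : ℕ) - u < k) with hW
  have haW : a ∈ W := by
    simp only [hW, Finset.mem_filter, Finset.mem_univ, true_and]
    exact ⟨hab, hbk⟩
  have hSσ : (W.filter (fun u => σ.symm u < σ.symm b)).card = code k σ b := by
    rw [hW, Finset.filter_filter]; unfold code; simp only [and_assoc]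
  have hSτ : (W.filter (fun u => τ.symm u < τ.symm b)).card = code k τ b := by
    rw [hW, Finset.filter_filter]; unfold code; simp only [and_assoc]
  have hab' : a ≠ b := fun hh => by simp [hh] at hab
  -- claim A
  have claimA : ∀ (ρ : Equiv.Perm (Fin n)),
      (ρ.symm a < ρ.symm b ↔
        (W.filter (fun u => ρ.symm u ≤ ρ.symm a)).card ≤
          (W.filter (fun u => ρ.symm u < ρ.symm b)).card) := by
    intro ρ
    constructor
    · intro hlt
      apply Finset.card_le_card
      intro u hu
      simp only [Finset.mem_filter] at hu ⊢
      exact ⟨hu.1, lt_of_le_of_lt hu.2 hlt⟩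
    · intro hcard
      by_contra hcon
      have hne : ρ.symm a ≠ ρ.symm b := fun hh => hab' (ρ.symm.injective hh)
      have hba : ρ.symm b < ρ.symm a := hne.lt_or_gt.resolve_left hcon
      have hsub : insert a (W.filter (fun u => ρ.symm u < ρ.symm b)) ⊆
          W.filter (fun u => ρ.symm u ≤ ρ.symm a) := by
        intro u hu
        rcases Finset.mem_insert.mp hu with rfl | hu
        · simp only [Finset.mem_filter]; exact ⟨haW, le_rfl⟩
        · simp only [Finset.mem_filter] at hu ⊢
          exact ⟨hu.1, le_of_lt (hu.2.trans hba)⟩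
      have hnotmem : a ∉ W.filter (fun u => ρ.symm u < ρ.symm b) := by
        simp only [Finset.mem_filter]
        rintro ⟨-, hx⟩; exact hcon hx
      have := Finset.card_le_card hsub
      rw [Finset.card_insert_of_notMem hnotmem] at this
      omega
  have claimB : W.filter (fun u => σ.symm u ≤ σ.symm a) =
      W.filter (fun u => τ.symm u ≤ τ.symm a) := by
    apply Finset.filter_congr
    intro u hu
    simp only [hW, Finset.mem_filter] at hu
    by_cases hua : u = a
    · subst hua; simp
    · have hbit := bits u a hu.2.1 hu.2.2 hab hbk hua
      have hσ : σ.symm u ≠ σ.symm a := fun hh => hua (σ.symm.injective hh)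
      have hτ : τ.symm u ≠ τ.symm a := fun hh => hua (τ.symm.injective hh)
      simp only [hσ.le_iff_lt, hτ.le_iff_lt]
      exact hbit
  rw [claimA σ, claimB, hSσ, h b, ← hSτ, ← claimA τ]




/-- Insert the new largest value `n` at position `p`. -/
def ins {n : ℕ} (σ : Equiv.Perm (Fin n)) (p : Fin (n + 1)) : Equiv.Perm (Fin (n + 1)) :=
  (finSuccEquiv' p).trans ((Equiv.optionCongr σ).trans (finSuccEquiv' (Fin.last n)).symm)

lemma ins_symm_last {n : ℕ} (σ : Equiv.Perm (Fin n)) (p : Fin (n + 1)) :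
    (ins σ p).symm (Fin.last n) = p := by
  simp only [ins, Equiv.symm_trans_apply, Equiv.symm_symm, finSuccEquiv'_at,
    ← Equiv.optionCongr_symm, Equiv.optionCongr_apply, Option.map_none, finSuccEquiv'_symm_none]

lemma ins_symm_castSucc {n : ℕ} (σ : Equiv.Perm (Fin n)) (p : Fin (n + 1)) (v : Fin n) :
    (ins σ p).symm (Fin.castSucc v) = p.succAbove (σ.symm v) := by
  have h : Fin.castSucc v = (Fin.last n).succAbove v := by rw [Fin.succAbove_last]
  simp only [ins, Equiv.symm_trans_apply, Equiv.symm_symm, h, finSuccEquiv'_succAbove,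
    ← Equiv.optionCongr_symm, Equiv.optionCongr_apply, Option.map_some, finSuccEquiv'_symm_some]

lemma succAbove_val_lt {n : ℕ} (p : Fin (n + 1)) (j : Fin n) :
    ((p.succAbove j : Fin (n + 1)) : ℕ) < (p : ℕ) ↔ (j : ℕ) < (p : ℕ) := by
  rw [Fin.succAbove]
  split <;> rename_i hsp <;> simp only [Fin.lt_def, Fin.coe_castSucc, Fin.val_succ] at hsp ⊢ <;>
    omega

/-- Counting function: number of window values placed before position `t`. -/
def G (k : ℕ) {n : ℕ} (σ : Equiv.Perm (Fin n)) (t : ℕ) : ℕ :=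
  (Finset.univ.filter (fun u : Fin n => n - (u : ℕ) < k ∧ ((σ.symm u : Fin n) : ℕ) < t)).card

lemma G_zero (k : ℕ) {n : ℕ} (σ : Equiv.Perm (Fin n)) : G k σ 0 = 0 := by
  simp [G]

lemma G_step (k : ℕ) {n : ℕ} (σ : Equiv.Perm (Fin n)) (t : ℕ) :
    G k σ (t + 1) ≤ G k σ t + 1 := by
  unfold G
  by_cases ht : t < n
  · have hsub : (Finset.univ.filter
        (fun u : Fin n => n - (u : ℕ) < k ∧ ((σ.symm u : Fin n) : ℕ) < t + 1)) ⊆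
        insert (σ ⟨t, ht⟩) (Finset.univ.filter
          (fun u : Fin n => n - (u : ℕ) < k ∧ ((σ.symm u : Fin n) : ℕ) < t)) := by
      intro u hu
      simp only [Finset.mem_filter, Finset.mem_univ, true_and] at hu
      rcases Nat.lt_succ_iff_lt_or_eq.mp hu.2 with h | h
      · exact Finset.mem_insert_of_mem (by simp [hu.1, h])
      · have h1 : σ.symm u = ⟨t, ht⟩ := Fin.ext h
        have h2 : u = σ ⟨t, ht⟩ := by rw [← h1]; simp
        exact Finset.mem_insert.mpr (Or.inl h2)
    calc _ ≤ _ := Finset.card_le_card hsub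
    _ ≤ _ + 1 := Finset.card_insert_le _ _
  · have heq : (Finset.univ.filter
        (fun u : Fin n => n - (u : ℕ) < k ∧ ((σ.symm u : Fin n) : ℕ) < t + 1)) =
        (Finset.univ.filter
          (fun u : Fin n => n - (u : ℕ) < k ∧ ((σ.symm u : Fin n) : ℕ) < t)) := by
      apply Finset.filter_congr
      intro u _
      have := (σ.symm u).isLt
      constructor <;> rintro ⟨h1, h2⟩ <;> exact ⟨h1, by omega⟩
    rw [heq]
    omega

lemma G_top (k : ℕ) {n : ℕ} (hk : 1 ≤ k) (σ : Equiv.Perm (Fin n)) :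
    G k σ n = min n (k - 1) := by
  unfold G
  have heq : (Finset.univ.filter
      (fun u : Fin n => n - (u : ℕ) < k ∧ ((σ.symm u : Fin n) : ℕ) < n)) =
      (Finset.univ.filter (fun u : Fin n => n - (u : ℕ) < k)) := by
    apply Finset.filter_congr
    intro u _
    have := (σ.symm u).isLt
    constructor
    · rintro ⟨h1, _⟩; exact h1
    · intro h1; exact ⟨h1, this⟩
  rw [heq]
  have hcard : (Finset.univ.filter (fun u : Fin n => n - (u : ℕ) < k)).card =
      (Finset.Ico (n - (k - 1)) n).card := by
    refine Finset.card_bij' (fun u _ => (u : ℕ))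
      (fun x hx => (⟨x, (Finset.mem_Ico.mp hx).2⟩ : Fin n)) ?_ ?_
      (fun u hu => Fin.ext rfl) (fun x hx => rfl)
    · intro u hu
      simp only [Finset.mem_filter, Finset.mem_univ, true_and] at hu
      have := u.isLt
      simp only [Finset.mem_Ico]
      omega
    · intro x hx
      simp only [Finset.mem_Ico] at hx
      simp only [Finset.mem_filter, Finset.mem_univ, true_and]
      omega
  rw [hcard, Nat.card_Ico]
  omega

lemma code_ins_castSucc (k : ℕ) {n : ℕ} (σ : Equiv.Perm (Fin n)) (p : Fin (n + 1)) (v : Fin n) :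
    code k (ins σ p) (Fin.castSucc v) = code k σ v := by
  unfold code
  have hset : (Finset.univ.filter (fun u : Fin (n + 1) =>
      (u : ℕ) < ((Fin.castSucc v : Fin (n + 1)) : ℕ) ∧
      ((Fin.castSucc v : Fin (n + 1)) : ℕ) - (u : ℕ) < k ∧
      (ins σ p).symm u < (ins σ p).symm (Fin.castSucc v))) =
      (Finset.univ.filter (fun u : Fin n =>
        (u : ℕ) < (v : ℕ) ∧ (v : ℕ) - (u : ℕ) < k ∧ σ.symm u < σ.symm v)).image
        Fin.castSucc := by
    ext u
    simp only [Finset.mem_filter, Finset.mem_univ, true_and, Finset.mem_image,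
      Fin.coe_castSucc]
    constructor
    · rintro ⟨h1, h2, h3⟩
      have hun : (u : ℕ) < n := lt_trans h1 v.isLt
      refine ⟨⟨u, hun⟩, ⟨h1, h2, ?_⟩, Fin.ext rfl⟩
      have hu : u = Fin.castSucc ⟨u, hun⟩ := Fin.ext rfl
      rw [hu, ins_symm_castSucc, ins_symm_castSucc] at h3
      exact (Fin.succAbove_lt_succAbove_iff).mp h3
    · rintro ⟨u', ⟨h1, h2, h3⟩, rfl⟩
      refine ⟨h1, h2, ?_⟩
      rw [ins_symm_castSucc, ins_symm_castSucc]
      exact (Fin.succAbove_lt_succAbove_iff).mpr h3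
  rw [hset, Finset.card_image_of_injective _ (Fin.castSucc_injective n)]

lemma code_ins_last (k : ℕ) {n : ℕ} (σ : Equiv.Perm (Fin n)) (p : Fin (n + 1)) :
    code k (ins σ p) (Fin.last n) = G k σ (p : ℕ) := by
  unfold code G
  have hset : (Finset.univ.filter (fun u : Fin (n + 1) =>
      (u : ℕ) < ((Fin.last n : Fin (n + 1)) : ℕ) ∧
      ((Fin.last n : Fin (n + 1)) : ℕ) - (u : ℕ) < k ∧
      (ins σ p).symm u < (ins σ p).symm (Fin.last n))) =
      (Finset.univ.filter (fun u : Fin n =>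
        n - (u : ℕ) < k ∧ ((σ.symm u : Fin n) : ℕ) < (p : ℕ))).image Fin.castSucc := by
    ext u
    simp only [Finset.mem_filter, Finset.mem_univ, true_and, Finset.mem_image,
      Fin.val_last]
    constructor
    · rintro ⟨h1, h2, h3⟩
      refine ⟨⟨u, h1⟩, ⟨h2, ?_⟩, Fin.ext rfl⟩
      have hu : u = Fin.castSucc ⟨u, h1⟩ := Fin.ext rfl
      rw [hu, ins_symm_castSucc, ins_symm_last] at h3
      exact (succAbove_val_lt p _).mp (Fin.lt_def.mp h3)
    · rintro ⟨u', ⟨h1, h2⟩, rfl⟩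
      refine ⟨u'.isLt, by simp [h1], ?_⟩
      rw [ins_symm_castSucc, ins_symm_last]
      exact Fin.lt_def.mpr ((succAbove_val_lt p _).mpr h2)
  rw [hset, Finset.card_image_of_injective _ (Fin.castSucc_injective n)]

lemma reach (f : ℕ → ℕ) (h0 : f 0 = 0) (hs : ∀ t, f (t + 1) ≤ f t + 1) :
    ∀ N j, j ≤ f N → ∃ t ≤ N, f t = j := by
  intro N
  induction N with
  | zero => intro j hj; exact ⟨0, le_rfl, by omega⟩
  | succ N IH =>
    intro j hj
    rcases le_or_gt j (f N) with h | h
    · obtain ⟨t, ht, h'⟩ := IH j h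
      exact ⟨t, ht.trans (Nat.le_succ N), h'⟩
    · have := hs N
      exact ⟨N + 1, le_rfl, by omega⟩

lemma exists_perm_code (k : ℕ) (hk : 1 ≤ k) :
    ∀ (n : ℕ) (d : Fin n → ℕ), (∀ v, d v < min ((v : ℕ) + 1) k) →
      ∃ σ : Equiv.Perm (Fin n), ∀ v, code k σ v = d v := by
  intro n
  induction n with
  | zero => intro d _; exact ⟨1, fun v => v.elim0⟩
  | succ n IH =>
    intro d hd
    obtain ⟨σ, hσ⟩ := IH (fun v => d v.castSucc)
      (fun v => by have := hd v.castSucc; simpa using this)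
    have hdl : d (Fin.last n) ≤ G k σ n := by
      rw [G_top k hk σ]
      have := hd (Fin.last n)
      simp only [Fin.val_last] at this
      omega
    obtain ⟨t, ht, hGt⟩ := reach (G k σ) (G_zero k σ) (G_step k σ) n (d (Fin.last n)) hdl
    refine ⟨ins σ ⟨t, by omega⟩, ?_⟩
    intro v
    induction v using Fin.lastCases with
    | last =>
      rw [code_ins_last]
      exact hGt
    | cast v =>
      rw [code_ins_castSucc, hσ]

end RecoilAux
namespace RecoilAux

lemma prod_min_le {k n : ℕ} (h : n ≤ k) :
    ∏ v : Fin n, min ((v : ℕ) + 1) k = Nat.factorial n := by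
  induction n with
  | zero => simp
  | succ n IH =>
    rw [Fin.prod_univ_castSucc (f := fun v : Fin (n + 1) => min ((v : ℕ) + 1) k)]
    simp only [Fin.coe_castSucc, Fin.val_last]
    rw [IH (by omega), min_eq_left h, Nat.factorial_succ, Nat.mul_comm]

lemma prod_min_ge {k n : ℕ} (hk : 1 ≤ k) (h : k ≤ n) :
    ∏ v : Fin n, min ((v : ℕ) + 1) k = Nat.factorial k * k ^ (n - k) := by
  induction n with
  | zero => exact absurd h (by omega)
  | succ n IH =>
    rcases Nat.lt_or_ge n k with hnk | hnk
    · have hkn : n + 1 = k := by omega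
      subst hkn
      rw [Nat.sub_self, pow_zero, Nat.mul_one, prod_min_le (le_refl _)]
    · rw [Fin.prod_univ_castSucc (f := fun v : Fin (n + 1) => min ((v : ℕ) + 1) k)]
      simp only [Fin.coe_castSucc, Fin.val_last]
      rw [IH hnk, min_eq_right (by omega)]
      have hs : n + 1 - k = (n - k) + 1 := by omega
      rw [hs, pow_succ, Nat.mul_assoc]

end RecoilAux

/-- the number of `≡_k` classes on `S_n` is `n!` if `n ≤ k`
and `k! · k^(n-k)` if `n ≥ k`. -/
theorem num_recoil_classes (k n : ℕ) (hk : 2 ≤ k) :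
    (n ≤ k → Nat.card (Quotient (recoilSetoid k n)) = Nat.factorial n) ∧
    (k ≤ n → Nat.card (Quotient (recoilSetoid k n)) =
      Nat.factorial k * k ^ (n - k)) := by
  have hk1 : 1 ≤ k := by omega
  classical
  set F : Equiv.Perm (Fin n) → (∀ v : Fin n, Fin (min ((v : ℕ) + 1) k)) :=
    fun σ v => ⟨RecoilAux.code k σ v, RecoilAux.code_lt hk1 σ v⟩ with hF
  have hresp : ∀ σ τ, recoilEquiv k n σ τ → F σ = F τ := by
    intro σ τ h
    funext v
    exact Fin.ext (RecoilAux.code_eq_of_recoil h v)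
  set Fl : Quotient (recoilSetoid k n) → (∀ v : Fin n, Fin (min ((v : ℕ) + 1) k)) :=
    Quotient.lift F hresp with hFl
  have hbij : Function.Bijective Fl := by
    constructor
    · intro q1 q2
      refine Quotient.inductionOn₂ q1 q2 ?_
      intro σ τ hEq
      apply Quotient.sound
      apply RecoilAux.recoil_of_code_eq
      intro v
      have h1 : F σ v = F τ v := congrFun hEq v
      exact congrArg Fin.val h1
    · intro d
      obtain ⟨σ, hσ⟩ := RecoilAux.exists_perm_code k hk1 n (fun v => (d v : ℕ))
        (fun v => (d v).isLt)
      exact ⟨Quotient.mk (recoilSetoid k n) σ, funext fun v => Fin.ext (hσ v)⟩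
  have hcardeq : Nat.card (Quotient (recoilSetoid k n)) =
      ∏ v : Fin n, min ((v : ℕ) + 1) k := by
    rw [Nat.card_congr (Equiv.ofBijective Fl hbij), Nat.card_eq_fintype_card,
      Fintype.card_pi]
    simp [Fintype.card_fin]
  constructor
  · intro h
    rw [hcardeq, RecoilAux.prod_min_le h]
  · intro h
    rw [hcardeq, RecoilAux.prod_min_ge hk1 h]
end

section
/- For every integer k ≥ 2 and every n ≥ 0, a word (d_1, …, d_n) with entries in {1, …, k} is the k-descent code DC_k(σ) of some permutation σ ∈ S_n if and only if max(k − ℓ + 1, 1) ≤ d_ℓ ≤ k for every ℓ with 1 ≤ ℓ ≤ n. -/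
namespace Aux
variable {n : ℕ}


lemma extPerm_of_nonpos (σ : Equiv.Perm (Fin n)) {j : ℤ} (h : ¬(0 < j ∧ j ≤ (n:ℤ))) :
    extPerm σ j = j := dif_neg h

lemma extPerm_eq' (σ : Equiv.Perm (Fin n)) (m : ℕ) (hm : m < n) :
    extPerm σ ((m:ℤ)+1) = ((σ ⟨m, hm⟩ : ℕ) : ℤ) + 1 := by
  unfold extPerm
  rw [dif_pos (by constructor <;> omega : (0:ℤ) < (m:ℤ)+1 ∧ (m:ℤ)+1 ≤ (n:ℤ))]
  simp only [show ((m:ℤ)+1-1).toNat = m from by omega]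

lemma extPerm_bounds (σ : Equiv.Perm (Fin n)) {j : ℤ} (h1 : 0 < j) (h2 : j ≤ (n:ℤ)) :
    1 ≤ extPerm σ j ∧ extPerm σ j ≤ (n:ℤ) := by
  obtain ⟨a, ha, rfl⟩ : ∃ a : ℕ, a < n ∧ j = (a:ℤ)+1 := ⟨(j-1).toNat, by omega, by omega⟩
  rw [extPerm_eq' σ a ha]
  have := (σ ⟨a, ha⟩).isLt
  omega

lemma extPerm_inj (σ : Equiv.Perm (Fin n)) {i j : ℤ} (hi1 : 0 < i) (hi2 : i ≤ (n:ℤ))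
    (hj1 : 0 < j) (hj2 : j ≤ (n:ℤ)) (h : extPerm σ i = extPerm σ j) : i = j := by
  obtain ⟨a, ha, rfl⟩ : ∃ a : ℕ, a < n ∧ i = (a:ℤ)+1 := ⟨(i-1).toNat, by omega, by omega⟩
  obtain ⟨b, hb, rfl⟩ : ∃ b : ℕ, b < n ∧ j = (b:ℤ)+1 := ⟨(j-1).toNat, by omega, by omega⟩
  rw [extPerm_eq' σ a ha, extPerm_eq' σ b hb] at h
  have h2 : σ ⟨a, ha⟩ = σ ⟨b, hb⟩ := Fin.ext (by omega)
  have h3 := σ.injective h2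
  have h4 : a = b := congrArg Fin.val h3
  omega

def ins (τ : Equiv.Perm (Fin n)) (v : Fin (n+1)) : Equiv.Perm (Fin (n+1)) :=
  finSuccEquivLast.trans ((Equiv.optionCongr τ).trans (finSuccEquiv' v).symm)

lemma ins_apply_castSucc (τ : Equiv.Perm (Fin n)) (v : Fin (n+1)) (i : Fin n) :
    ins τ v i.castSucc = v.succAbove (τ i) := by simp [ins]

lemma ins_apply_last (τ : Equiv.Perm (Fin n)) (v : Fin (n+1)) :
    ins τ v (Fin.last n) = v := by simp [ins]

lemma succAbove_val (v : Fin (n+1)) (a : Fin n) :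
    ((v.succAbove a : Fin (n+1)) : ℕ) = if (a:ℕ) < v then (a:ℕ) else (a:ℕ)+1 := by
  rcases lt_or_ge (a.castSucc) v with h | h
  · rw [Fin.succAbove_of_castSucc_lt _ _ h]
    simp only [Fin.lt_def, Fin.coe_castSucc] at h
    simp [Fin.coe_castSucc, if_pos h]
  · rw [Fin.succAbove_of_le_castSucc _ _ h]
    simp only [Fin.le_def, Fin.coe_castSucc] at h
    simp [Fin.val_succ, if_neg (by omega : ¬ (a:ℕ) < (v:ℕ))]

lemma extPerm_ins_mid (τ : Equiv.Perm (Fin n)) (v : Fin (n+1)) (m : ℕ) (hm : m < n) :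
    extPerm (ins τ v) ((m:ℤ)+1) = ((v.succAbove (τ ⟨m, hm⟩) : ℕ) : ℤ) + 1 := by
  rw [extPerm_eq' (ins τ v) m (by omega)]
  congr 2
  rw [show (⟨m, by omega⟩ : Fin (n+1)) = (⟨m, hm⟩ : Fin n).castSucc from rfl,
    ins_apply_castSucc]

lemma extPerm_ins_last (τ : Equiv.Perm (Fin n)) (v : Fin (n+1)) :
    extPerm (ins τ v) ((n:ℤ)+1) = ((v:ℕ):ℤ) + 1 := by
  rw [extPerm_eq' (ins τ v) n (by omega)]
  congr 2
  rw [show (⟨n, by omega⟩ : Fin (n+1)) = Fin.last n from rfl, ins_apply_last]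



lemma ins_le_iff (τ : Equiv.Perm (Fin n)) (v : Fin (n+1)) {i j : ℤ}
    (hi1 : 0 < i) (hi2 : i ≤ (n:ℤ)) (hj1 : 0 < j) (hj2 : j ≤ (n:ℤ)) :
    (extPerm (ins τ v) i ≤ extPerm (ins τ v) j ↔ extPerm τ i ≤ extPerm τ j) := by
  obtain ⟨a, ha, rfl⟩ : ∃ a : ℕ, a < n ∧ i = (a:ℤ)+1 := ⟨(i-1).toNat, by omega, by omega⟩
  obtain ⟨b, hb, rfl⟩ : ∃ b : ℕ, b < n ∧ j = (b:ℤ)+1 := ⟨(j-1).toNat, by omega, by omega⟩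
  rw [extPerm_ins_mid τ v a ha, extPerm_ins_mid τ v b hb, extPerm_eq' τ a ha,
    extPerm_eq' τ b hb]
  have h1 : v.succAbove (τ ⟨a, ha⟩) ≤ v.succAbove (τ ⟨b, hb⟩) ↔ τ ⟨a, ha⟩ ≤ τ ⟨b, hb⟩ :=
    Fin.succAbove_le_succAbove_iff
  simp only [Fin.le_def] at h1
  omega

lemma ins_le_last_iff (τ : Equiv.Perm (Fin n)) (v : Fin (n+1)) {j : ℤ}
    (hj1 : 0 < j) (hj2 : j ≤ (n:ℤ)) :
    (extPerm (ins τ v) j ≤ extPerm (ins τ v) ((n:ℤ)+1) ↔ extPerm τ j ≤ ((v:ℕ):ℤ)) := by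
  obtain ⟨a, ha, rfl⟩ : ∃ a : ℕ, a < n ∧ j = (a:ℤ)+1 := ⟨(j-1).toNat, by omega, by omega⟩
  rw [extPerm_ins_mid τ v a ha, extPerm_ins_last, extPerm_eq' τ a ha, succAbove_val]
  split_ifs with hc <;> omega

noncomputable def HH (k : ℕ) (τ : Equiv.Perm (Fin n)) (v : ℕ) : ℕ :=
  ((Finset.Icc ((n:ℤ)+1-k+1) ((n:ℤ)+1)).filter
    (fun j => j ≤ 0 ∨ (n:ℤ) < j ∨ extPerm τ j ≤ (v:ℤ))).card

lemma HH_zero (k : ℕ) (hk : 2 ≤ k) (τ : Equiv.Perm (Fin n)) : HH k τ 0 = max (k - n) 1 := by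
  unfold HH
  rw [Finset.filter_congr (q := fun j => j ≤ 0 ∨ (n:ℤ) < j) ?_]
  · have he : (Finset.Icc ((n:ℤ)+1-k+1) ((n:ℤ)+1)).filter (fun j => j ≤ 0 ∨ (n:ℤ) < j)
        = Finset.Icc ((n:ℤ)+1-k+1) 0 ∪ {(n:ℤ)+1} := by
      ext j
      simp only [Finset.mem_filter, Finset.mem_Icc, Finset.mem_union, Finset.mem_singleton]
      omega
    rw [he, Finset.card_union_of_disjoint (by
      simp only [Finset.disjoint_singleton_right, Finset.mem_Icc]; omega),
      Int.card_Icc, Finset.card_singleton]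
    omega
  · intro j hj
    simp only [Finset.mem_Icc] at hj
    by_cases h0 : 0 < j
    · by_cases hn : j ≤ (n:ℤ)
      · obtain ⟨b1, b2⟩ := extPerm_bounds τ h0 hn
        simp only [Nat.cast_zero]
        omega
      · simp only [Nat.cast_zero]; omega
    · simp only [Nat.cast_zero]; omega

lemma HH_top (k : ℕ) (hk : 2 ≤ k) (τ : Equiv.Perm (Fin n)) : HH k τ n = k := by
  unfold HH
  rw [Finset.filter_true_of_mem ?_, Int.card_Icc]
  · omega
  · intro j hj
    simp only [Finset.mem_Icc] at hj
    by_cases h0 : 0 < j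
    · by_cases hn : j ≤ (n:ℤ)
      · obtain ⟨b1, b2⟩ := extPerm_bounds τ h0 hn; omega
      · omega
    · omega

lemma HH_step (k : ℕ) (τ : Equiv.Perm (Fin n)) (v : ℕ) : HH k τ (v+1) ≤ HH k τ v + 1 := by
  unfold HH
  have hsub : (Finset.Icc ((n:ℤ)+1-k+1) ((n:ℤ)+1)).filter
        (fun j => j ≤ 0 ∨ (n:ℤ) < j ∨ extPerm τ j ≤ ((v+1:ℕ):ℤ))
      ⊆ (Finset.Icc ((n:ℤ)+1-k+1) ((n:ℤ)+1)).filter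
          (fun j => j ≤ 0 ∨ (n:ℤ) < j ∨ extPerm τ j ≤ (v:ℤ))
        ∪ (Finset.Icc ((n:ℤ)+1-k+1) ((n:ℤ)+1)).filter
            (fun j => 0 < j ∧ j ≤ (n:ℤ) ∧ extPerm τ j = (v:ℤ)+1) := by
    intro j hj
    simp only [Finset.mem_filter, Finset.mem_union, Finset.mem_Icc] at hj ⊢
    omega
  have h1 := Finset.card_le_card hsub
  have h2 := Finset.card_union_le
    ((Finset.Icc ((n:ℤ)+1-k+1) ((n:ℤ)+1)).filter
      (fun j => j ≤ 0 ∨ (n:ℤ) < j ∨ extPerm τ j ≤ (v:ℤ)))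
    ((Finset.Icc ((n:ℤ)+1-k+1) ((n:ℤ)+1)).filter
      (fun j => 0 < j ∧ j ≤ (n:ℤ) ∧ extPerm τ j = (v:ℤ)+1))
  have h3 : ((Finset.Icc ((n:ℤ)+1-k+1) ((n:ℤ)+1)).filter
      (fun j => 0 < j ∧ j ≤ (n:ℤ) ∧ extPerm τ j = (v:ℤ)+1)).card ≤ 1 := by
    apply Finset.card_le_one.mpr
    intro a ha b hb
    simp only [Finset.mem_filter] at ha hb
    exact extPerm_inj τ ha.2.1 ha.2.2.1 hb.2.1 hb.2.2.1 (ha.2.2.2.trans hb.2.2.2.symm)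
  omega

lemma ivt (H : ℕ → ℕ) (hstep : ∀ v, H (v+1) ≤ H v + 1) (t : ℕ) :
    ∀ N, H 0 ≤ t → t ≤ H N → ∃ v ≤ N, H v = t := by
  intro N
  induction N with
  | zero => intro h1 h2; exact ⟨0, le_rfl, le_antisymm h1 h2⟩
  | succ N ih =>
    intro h1 h2
    by_cases h : t ≤ H N
    · obtain ⟨v, hv, he⟩ := ih h1 h
      exact ⟨v, by omega, he⟩
    · exact ⟨N+1, le_rfl, by have := hstep N; omega⟩



lemma DC_ins_castSucc (k : ℕ) (τ : Equiv.Perm (Fin n)) (v : Fin (n+1)) (ℓ : Fin n) :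
    DC k (ins τ v) ℓ.castSucc = DC k τ ℓ := by
  unfold DC
  simp only [Fin.coe_castSucc]
  congr 1
  apply Finset.filter_congr
  intro j hj
  simp only [Finset.mem_Icc] at hj
  have hl := ℓ.isLt
  have hl1 : (0:ℤ) < ((ℓ:ℕ):ℤ)+1 := by omega
  have hl2 : ((ℓ:ℕ):ℤ)+1 ≤ (n:ℤ) := by omega
  by_cases h0 : 0 < j
  · exact ins_le_iff τ v h0 (by omega) hl1 hl2
  · have h1 : extPerm (ins τ v) j = j := extPerm_of_nonpos _ (by omega)
    have h2 : extPerm τ j = j := extPerm_of_nonpos _ (by omega)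
    obtain ⟨b1, b2⟩ := extPerm_bounds (ins τ v) hl1 (by push_cast; omega)
    obtain ⟨c1, c2⟩ := extPerm_bounds τ hl1 hl2
    rw [h1, h2]
    constructor <;> intro _ <;> omega

lemma DC_ins_last (k : ℕ) (τ : Equiv.Perm (Fin n)) (v : Fin (n+1)) :
    DC k (ins τ v) (Fin.last n) = HH k τ (v:ℕ) := by
  unfold DC HH
  simp only [Fin.val_last]
  congr 1
  apply Finset.filter_congr
  intro j hj
  simp only [Finset.mem_Icc] at hj
  by_cases h0 : 0 < j
  · by_cases hn : j ≤ (n:ℤ)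
    · rw [ins_le_last_iff τ v h0 hn]
      obtain ⟨b1, b2⟩ := extPerm_bounds τ h0 hn
      constructor
      · intro h; exact Or.inr (Or.inr h)
      · rintro (h | h | h) <;> omega
    · have hj1 : j = (n:ℤ)+1 := by omega
      constructor
      · intro _; exact Or.inr (Or.inl (by omega))
      · intro _; rw [hj1]
  · have h1 : extPerm (ins τ v) j = j := extPerm_of_nonpos _ (by omega)
    obtain ⟨b1, b2⟩ := extPerm_bounds (ins τ v) (j := (n:ℤ)+1) (by omega) (by push_cast; omega)
    constructor
    · intro _; exact Or.inl (by omega)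
    · intro _; rw [h1]; omega

lemma bounds_of_DC (k : ℕ) (hk : 2 ≤ k) (σ : Equiv.Perm (Fin n)) (ℓ : Fin n) :
    max (k - ((ℓ:ℕ)+1) + 1) 1 ≤ DC k σ ℓ ∧ DC k σ ℓ ≤ k := by
  have hl := ℓ.isLt
  have hl1 : (0:ℤ) < ((ℓ:ℕ):ℤ)+1 := by omega
  have hl2 : ((ℓ:ℕ):ℤ)+1 ≤ (n:ℤ) := by omega
  obtain ⟨b1, b2⟩ := extPerm_bounds σ hl1 hl2
  constructor
  · have hsub : Finset.Icc (((ℓ:ℕ):ℤ)+1-k+1) 0 ∪ {((ℓ:ℕ):ℤ)+1}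
        ⊆ (Finset.Icc (((ℓ:ℕ):ℤ)+1-k+1) (((ℓ:ℕ):ℤ)+1)).filter
            (fun j => extPerm σ j ≤ extPerm σ (((ℓ:ℕ):ℤ)+1)) := by
      intro j hj
      simp only [Finset.mem_union, Finset.mem_Icc, Finset.mem_singleton,
        Finset.mem_filter] at hj ⊢
      rcases hj with ⟨hj1, hj2⟩ | rfl
      · have he := extPerm_of_nonpos σ (j := j) (by omega)
        exact ⟨⟨hj1, by omega⟩, by rw [he]; omega⟩
      · exact ⟨⟨by omega, le_rfl⟩, le_rfl⟩
    have hc := Finset.card_le_card hsub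
    rw [Finset.card_union_of_disjoint (by
        simp only [Finset.disjoint_singleton_right, Finset.mem_Icc]; omega),
      Int.card_Icc, Finset.card_singleton] at hc
    unfold DC
    omega
  · unfold DC
    have := Finset.card_filter_le (Finset.Icc (((ℓ:ℕ):ℤ)+1-k+1) (((ℓ:ℕ):ℤ)+1))
      (fun j => extPerm σ j ≤ extPerm σ (((ℓ:ℕ):ℤ)+1))
    rw [Int.card_Icc] at this
    omega

lemma exists_of_bounds (k : ℕ) (hk : 2 ≤ k) :
    ∀ (n : ℕ) (d : Fin n → ℕ),
      (∀ ℓ : Fin n, max (k - ((ℓ:ℕ)+1) + 1) 1 ≤ d ℓ ∧ d ℓ ≤ k) →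
      ∃ σ : Equiv.Perm (Fin n), DC k σ = d := by
  intro n
  induction n with
  | zero => intro d _; exact ⟨1, funext fun ℓ => ℓ.elim0⟩
  | succ n ih =>
    intro d hd
    obtain ⟨τ, hτ⟩ := ih (fun ℓ => d ℓ.castSucc)
      (fun ℓ => by simpa using hd ℓ.castSucc)
    have hlast := hd (Fin.last n)
    simp only [Fin.val_last] at hlast
    have h0 : HH k τ 0 ≤ d (Fin.last n) := by rw [HH_zero k hk τ]; omega
    have htop : d (Fin.last n) ≤ HH k τ n := by rw [HH_top k hk τ]; exact hlast.2
    obtain ⟨v, hv, hve⟩ := ivt (HH k τ) (HH_step k τ) (d (Fin.last n)) n h0 htop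
    refine ⟨ins τ ⟨v, by omega⟩, funext fun ℓ => ?_⟩
    refine Fin.lastCases ?_ ?_ ℓ
    · rw [DC_ins_last k τ ⟨v, by omega⟩]; exact hve
    · intro i
      rw [DC_ins_castSucc k τ ⟨v, by omega⟩ i]
      exact congrFun hτ i


end Aux

/-- a word `(d_1, …, d_n)` with entries in `{1, …, k}` is the
`k`-descent code of some `σ ∈ S_n` iff `max (k - ℓ + 1) 1 ≤ d_ℓ ≤ k` for all
`1 ≤ ℓ ≤ n` (here `d ℓ` is `d_{ℓ+1}`, `ℓ : Fin n` being 0-indexed). -/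
theorem descent_code_characterization (k n : ℕ) (hk : 2 ≤ k) (d : Fin n → ℕ) :
    (∃ σ : Equiv.Perm (Fin n), DC k σ = d) ↔
      (∀ ℓ : Fin n, max (k - ((ℓ : ℕ) + 1) + 1) 1 ≤ d ℓ ∧ d ℓ ≤ k) := by
  constructor
  · rintro ⟨σ, rfl⟩ ℓ
    exact Aux.bounds_of_DC k hk σ ℓ
  · exact Aux.exists_of_bounds k hk n d
end

section
/- For every integer k ≥ 2, every n ≥ 0, and all σ, τ ∈ S_n, one has σ ≡_k τ if and only if DC_k(σ⁻¹) = DC_k(τ⁻¹), i.e., two permutations are k-recoil equivalent exactly when their inverses have the same k-descent code. -/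
lemma extPerm_of_mem' {n : ℕ} (σ : Equiv.Perm (Fin n)) (i : ℤ)
    (h1 : 0 < i) (h2 : i ≤ n) (hh : (i-1).toNat < n) :
    extPerm σ i = (σ ⟨(i-1).toNat, hh⟩ : ℤ) + 1 := by
  rw [extPerm, dif_pos ⟨h1, h2⟩]

lemma extPerm_of_not' {n : ℕ} (σ : Equiv.Perm (Fin n)) (i : ℤ)
    (h : ¬(0 < i ∧ i ≤ (n:ℤ))) : extPerm σ i = i := by
  rw [extPerm, dif_neg h]

/-- auxiliary: the window filter set -/
def Nset (k : ℕ) {n : ℕ} (σ : Equiv.Perm (Fin n)) (ℓ : Fin n) : Finset (Fin n) :=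
  Finset.univ.filter (fun a => (a:ℕ) < ℓ ∧ (ℓ:ℕ) - (a:ℕ) < k ∧ σ.symm a < σ.symm ℓ)

lemma DC_inv_eq (k : ℕ) (hk : 2 ≤ k) {n : ℕ} (σ : Equiv.Perm (Fin n)) (ℓ : Fin n) :
    DC k σ⁻¹ ℓ = (Finset.Icc ((ℓ:ℤ)+1-(k:ℤ)+1) 0).card + 1 + (Nset k σ ℓ).card := by
  have hℓn : (ℓ:ℕ) < n := ℓ.isLt
  have htop : extPerm σ⁻¹ ((ℓ:ℤ)+1) = (σ.symm ℓ : ℤ) + 1 := by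
    rw [extPerm_of_mem' σ⁻¹ _ (by omega) (by exact_mod_cast Nat.succ_le_of_lt hℓn) (by omega)]
    have hmk : (⟨(((ℓ:ℤ)+1-1)).toNat, by omega⟩ : Fin n) = ℓ := by ext; simp
    rw [hmk]; rfl
  have hset : (Finset.Icc ((ℓ:ℤ)+1-(k:ℤ)+1) ((ℓ:ℤ)+1)).filter
      (fun j => extPerm σ⁻¹ j ≤ extPerm σ⁻¹ ((ℓ:ℤ)+1))
      = (Finset.Icc ((ℓ:ℤ)+1-(k:ℤ)+1) 0) ∪ insert ((ℓ:ℤ)+1)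
          ((Nset k σ ℓ).image (fun a : Fin n => ((a:ℕ):ℤ)+1)) := by
    ext j
    simp only [Finset.mem_filter, Finset.mem_Icc, Finset.mem_union, Finset.mem_insert,
      Finset.mem_image, htop]
    constructor
    · rintro ⟨⟨hj1, hj2⟩, hj3⟩
      by_cases hj0 : j ≤ 0
      · left; omega
      · right
        push_neg at hj0
        have hjn : j ≤ (n:ℤ) := by omega
        have hlt : (j-1).toNat < n := by omega
        rw [extPerm_of_mem' σ⁻¹ j hj0 hjn hlt] at hj3
        by_cases hje : j = (ℓ:ℤ)+1
        · exact Or.inl hje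
        · right
          have hvlt : ((j-1).toNat : ℕ) < (ℓ:ℕ) := by omega
          refine ⟨⟨(j-1).toNat, hlt⟩, ?_, by simp; omega⟩
          simp only [Nset, Finset.mem_filter, Finset.mem_univ, true_and]
          refine ⟨hvlt, by omega, ?_⟩
          have hle : σ.symm (⟨(j-1).toNat, hlt⟩ : Fin n) ≤ σ.symm ℓ := by
            have h' : (σ⁻¹ (⟨(j-1).toNat, hlt⟩ : Fin n) : ℕ) ≤ ((σ.symm ℓ : ℕ)) := by omega
            exact h'
          refine lt_of_le_of_ne hle (fun hc => ?_)
          have h2 := congrArg Fin.val (σ.symm.injective hc)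
          simp at h2
          omega
    · rintro (hj | hj | ⟨a, ha, rfl⟩)
      · have hj0 : j ≤ 0 := hj.2
        rw [extPerm_of_not' σ⁻¹ j (by omega)]
        refine ⟨⟨hj.1, by omega⟩, by omega⟩
      · subst hj
        exact ⟨⟨by omega, le_refl _⟩, le_of_eq htop⟩
      · simp only [Nset, Finset.mem_filter, Finset.mem_univ, true_and] at ha
        obtain ⟨h1, h2, h3⟩ := ha
        have han : (a:ℕ) < n := a.isLt
        refine ⟨⟨by omega, by omega⟩, ?_⟩
        rw [extPerm_of_mem' σ⁻¹ _ (by omega) (by omega) (by omega)]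
        have hmk : (⟨(((a:ℤ)+1-1)).toNat, by omega⟩ : Fin n) = a := by ext; simp
        rw [hmk]
        have h4 : (σ.symm a : ℕ) < (σ.symm ℓ : ℕ) := h3
        show ((σ.symm a : ℕ) : ℤ) + 1 ≤ ((σ.symm ℓ : ℕ) : ℤ) + 1
        omega
  rw [DC, hset, Finset.card_union_of_disjoint, Finset.card_insert_of_notMem,
    Finset.card_image_of_injective]
  · omega
  · intro a b hab
    simp only at hab
    have h' : (a:ℕ) = (b:ℕ) := by omega
    exact Fin.ext h'
  · intro hmem
    simp only [Finset.mem_image] at hmem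
    obtain ⟨a, ha, hc⟩ := hmem
    simp only [Nset, Finset.mem_filter, Finset.mem_univ, true_and] at ha
    have : (a:ℕ) < (ℓ:ℕ) := ha.1
    omega
  · rw [Finset.disjoint_left]
    intro j hj
    simp only [Finset.mem_Icc] at hj
    simp only [Finset.mem_insert, Finset.mem_image, not_or, not_exists]
    refine ⟨by omega, ?_⟩
    rintro a ⟨_, hc⟩
    omega

lemma rank_iff {n : ℕ} (σ : Equiv.Perm (Fin n)) (W : Finset (Fin n)) (b : Fin n)
    (hbW : b ∉ W) (a : Fin n) (ha : a ∈ W) :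
    (σ.symm a < σ.symm b ↔
      (W.filter (fun x => σ.symm x ≤ σ.symm a)).card ≤
        (W.filter (fun x => σ.symm x < σ.symm b)).card) := by
  constructor
  · intro h
    apply Finset.card_le_card
    intro x hx
    simp only [Finset.mem_filter] at hx ⊢
    exact ⟨hx.1, lt_of_le_of_lt hx.2 h⟩
  · intro h
    by_contra hc
    have hab : a ≠ b := fun he => hbW (he ▸ ha)
    have hne : σ.symm a ≠ σ.symm b := fun he => hab (σ.symm.injective he)
    have hba : σ.symm b < σ.symm a := lt_of_le_of_ne (not_lt.mp hc) (Ne.symm hne)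
    have hss : (W.filter (fun x => σ.symm x < σ.symm b)) ⊂
        (W.filter (fun x => σ.symm x ≤ σ.symm a)) := by
      constructor
      · intro x hx
        simp only [Finset.mem_filter] at hx ⊢
        exact ⟨hx.1, le_of_lt (lt_trans hx.2 hba)⟩
      · intro hsub
        have h2 := hsub (Finset.mem_filter.mpr ⟨ha, le_refl _⟩)
        simp only [Finset.mem_filter] at h2
        exact hc h2.2
    exact absurd h (not_le.mpr (Finset.card_lt_card hss))

lemma le_iff_lt_of_ne {n : ℕ} (π : Equiv.Perm (Fin n)) (x y : Fin n) (hxy : x ≠ y) :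
    π.symm x ≤ π.symm y ↔ π.symm x < π.symm y :=
  ⟨fun h => lt_of_le_of_ne h (fun hc => hxy (π.symm.injective hc)), le_of_lt⟩

lemma back_dir (k n : ℕ) (σ τ : Equiv.Perm (Fin n))
    (hN : ∀ ℓ, (Nset k σ ℓ).card = (Nset k τ ℓ).card) :
    recoilEquiv k n σ τ := by
  suffices H : ∀ N : ℕ, ∀ b : Fin n, (b:ℕ) ≤ N → ∀ a : Fin n, (a:ℕ) < b → (b:ℕ) - a < k →
      (σ.symm a < σ.symm b ↔ τ.symm a < τ.symm b) by
    intro a b hab hbk; exact H b b le_rfl a hab hbk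
  intro N
  induction N with
  | zero => intro b hb a ha _; omega
  | succ N IH =>
    intro b hb a hab hbk
    by_cases hb' : (b:ℕ) ≤ N
    · exact IH b hb' a hab hbk
    have hbN : (b:ℕ) = N + 1 := by omega
    set W : Finset (Fin n) := Finset.univ.filter (fun x => (x:ℕ) < b ∧ (b:ℕ) - x < k) with hW
    have haW : a ∈ W := by
      simp only [hW, Finset.mem_filter, Finset.mem_univ, true_and]
      exact ⟨hab, hbk⟩
    have hbW : b ∉ W := by
      simp only [hW, Finset.mem_filter, Finset.mem_univ, true_and]
      omega
    have key : ∀ x ∈ W, (σ.symm x ≤ σ.symm a ↔ τ.symm x ≤ τ.symm a) := by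
      intro x hx
      simp only [hW, Finset.mem_filter, Finset.mem_univ, true_and] at hx
      rcases lt_trichotomy (x:ℕ) (a:ℕ) with h | h | h
      · have hxa : x ≠ a := fun he => by rw [he] at h; omega
        have hiff := IH a (by omega) x h (by omega)
        rw [le_iff_lt_of_ne σ x a hxa, le_iff_lt_of_ne τ x a hxa]
        exact hiff
      · have hxa : x = a := Fin.ext h
        subst hxa; simp
      · have hax : a ≠ x := fun he => by rw [he] at h; omega
        have hiff := IH x (by omega) a h (by omega)
        rw [← not_lt, ← not_lt]
        exact not_congr hiff
    have hNσ : Nset k σ b = W.filter (fun x => σ.symm x < σ.symm b) := by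
      simp [Nset, hW, Finset.filter_filter, and_assoc]
    have hNτ : Nset k τ b = W.filter (fun x => τ.symm x < τ.symm b) := by
      simp [Nset, hW, Finset.filter_filter, and_assoc]
    have hrank : (W.filter (fun x => σ.symm x ≤ σ.symm a)).card =
        (W.filter (fun x => τ.symm x ≤ τ.symm a)).card := by
      rw [Finset.filter_congr key]
    have hcards : (W.filter (fun x => σ.symm x < σ.symm b)).card =
        (W.filter (fun x => τ.symm x < τ.symm b)).card := by
      rw [← hNσ, ← hNτ]; exact hN b
    rw [rank_iff σ W b hbW a haW, rank_iff τ W b hbW a haW, hrank, hcards]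

/-- `σ ≡_k τ` iff the inverses have the same `k`-descent code. -/
theorem recoil_iff_inv_descent_code (k n : ℕ) (hk : 2 ≤ k)
    (σ τ : Equiv.Perm (Fin n)) :
    recoilEquiv k n σ τ ↔ DC k σ⁻¹ = DC k τ⁻¹ := by
  constructor
  · intro h
    funext ℓ
    have hNs : Nset k σ ℓ = Nset k τ ℓ := by
      simp only [Nset]
      apply Finset.filter_congr
      intro a _
      exact and_congr_right fun h1 => and_congr_right fun h2 => h a ℓ h1 h2
    rw [DC_inv_eq k hk, DC_inv_eq k hk, hNs]
  · intro h
    apply back_dir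
    intro ℓ
    have h2 := congrFun h ℓ
    rw [DC_inv_eq k hk, DC_inv_eq k hk] at h2
    omega
end

section
/- Let k ≥ 2 and n ≥ 0, and let R be the relation on S_n defined by: τ R σ if and only if there is an index 1 ≤ i ≤ n−1 such that |σ(i) − σ(i+1)| ≥ k and τ is obtained from the word σ(1)⋯σ(n) by exchanging the entries in positions i and i+1. Then for all σ, τ ∈ S_n, σ ≡_k τ if and only if σ and τ are related by the reflexive–transitive–symmetric closure of R, i.e., one can go from σ to τ by successively exchanging adjacent entries whose values differ by at least k. -/
/-- The elementary exchange relation: `adjSwapRel k τ σ` holds iff `τ` is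
obtained from the one-line word of `σ` by exchanging two adjacent entries
whose values differ by at least `k`. -/
def adjSwapRel (k : ℕ) {n : ℕ} (τ σ : Equiv.Perm (Fin n)) : Prop :=
  ∃ (i : ℕ) (h : i + 1 < n),
    ((σ ⟨i, Nat.lt_of_succ_lt h⟩ : ℕ) + k ≤ (σ ⟨i + 1, h⟩ : ℕ) ∨
     (σ ⟨i + 1, h⟩ : ℕ) + k ≤ (σ ⟨i, Nat.lt_of_succ_lt h⟩ : ℕ)) ∧
    τ = σ * Equiv.swap ⟨i, Nat.lt_of_succ_lt h⟩ ⟨i + 1, h⟩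

lemma swap_adj_lt {n : ℕ} {i j u v : Fin n} (hij : (j:ℕ) = (i:ℕ) + 1)
    (huv : u < v) (hne : ¬(u = i ∧ v = j)) :
    Equiv.swap i j u < Equiv.swap i j v := by
  rw [Equiv.swap_apply_def, Equiv.swap_apply_def]
  split_ifs <;> simp only [Fin.lt_def, Fin.ext_iff, not_and] at * <;> omega

lemma swap_adj_lt_iff {n : ℕ} {i j u v : Fin n} (hij : (j:ℕ) = (i:ℕ) + 1)
    (huv : u ≠ v) (hne1 : ¬(u = i ∧ v = j)) (hne2 : ¬(u = j ∧ v = i)) :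
    u < v ↔ Equiv.swap i j u < Equiv.swap i j v := by
  constructor
  · intro h; exact swap_adj_lt hij h hne1
  · intro h
    by_contra hlt
    have hvu : v < u := lt_of_le_of_ne (not_lt.mp hlt) (Ne.symm huv)
    have h2 := swap_adj_lt hij hvu (by tauto)
    exact absurd h (asymm h2)

lemma mul_swap_symm_apply {n : ℕ} (σ : Equiv.Perm (Fin n)) (p q x : Fin n) :
    (σ * Equiv.swap p q).symm x = Equiv.swap p q (σ.symm x) := by
  have : (σ * Equiv.swap p q).symm = (σ * Equiv.swap p q)⁻¹ := rfl
  rw [this, mul_inv_rev, Equiv.Perm.mul_apply, Equiv.swap_inv]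
  rfl

lemma recoil_of_adjSwap {k n : ℕ} (hk : 2 ≤ k) {σ τ : Equiv.Perm (Fin n)}
    (h : adjSwapRel k τ σ) : recoilEquiv k n σ τ := by
  obtain ⟨i, hi, hval, rfl⟩ := h
  intro a b hab hbk
  set p : Fin n := ⟨i, Nat.lt_of_succ_lt hi⟩ with hp
  set q : Fin n := ⟨i+1, hi⟩ with hq
  rw [mul_swap_symm_apply, mul_swap_symm_apply]
  apply swap_adj_lt_iff (by simp [hp, hq])
  · intro hcon
    have : a = b := σ.symm.injective hcon
    simp [this] at hab
  · rintro ⟨h1, h2⟩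
    have e1 : a = σ p := by rwa [Equiv.symm_apply_eq] at h1
    have e2 : b = σ q := by rwa [Equiv.symm_apply_eq] at h2
    rw [e1, e2] at hab hbk
    omega
  · rintro ⟨h1, h2⟩
    have e1 : a = σ q := by rwa [Equiv.symm_apply_eq] at h1
    have e2 : b = σ p := by rwa [Equiv.symm_apply_eq] at h2
    rw [e1, e2] at hab hbk
    omega

lemma eq_of_no_inv {n : ℕ} {σ τ : Equiv.Perm (Fin n)}
    (h : ∀ p q : Fin n, p < q → ¬ τ.symm (σ q) < τ.symm (σ p)) : σ = τ := by
  have hmono : StrictMono (fun p : Fin n => τ.symm (σ p)) := by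
    intro p q hpq
    rcases lt_trichotomy (τ.symm (σ p)) (τ.symm (σ q)) with hlt | heq | hgt
    · exact hlt
    · exact absurd (σ.injective (τ.symm.injective heq)) (ne_of_lt hpq)
    · exact absurd hgt (h p q hpq)
  have hsurj : Function.Surjective (fun p : Fin n => τ.symm (σ p)) :=
    (σ.trans τ.symm).surjective
  have hr : Set.range (fun p : Fin n => τ.symm (σ p)) = Set.range (id : Fin n → Fin n) := by
    rw [hsurj.range_eq, Set.range_id]
  have hfid := (@StrictMono.range_inj (Fin n) (Fin n) inferInstance inferInstance (inferInstance : WellFoundedLT (Fin n)) _ id hmono strictMono_id).mp hr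
  apply Equiv.ext
  intro x
  have := congrFun hfid x
  simpa [Equiv.symm_apply_eq] using this

lemma key (k : ℕ) (hk : 2 ≤ k) {n : ℕ} :
    ∀ N (σ τ : Equiv.Perm (Fin n)),
      ((Finset.univ : Finset (Fin n × Fin n)).filter
        (fun pr => pr.1 < pr.2 ∧ τ.symm (σ pr.2) < τ.symm (σ pr.1))).card ≤ N →
      recoilEquiv k n σ τ → Relation.EqvGen (adjSwapRel k) σ τ := by
  intro N
  induction N with
  | zero =>
    intro σ τ hcard hrec
    have hempty : ∀ p q : Fin n, p < q → ¬ τ.symm (σ q) < τ.symm (σ p) := by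
      intro p q hpq hlt
      have hmem : (p, q) ∈ (Finset.univ : Finset (Fin n × Fin n)).filter
          (fun pr => pr.1 < pr.2 ∧ τ.symm (σ pr.2) < τ.symm (σ pr.1)) := by
        simp [hpq, hlt]
      have := Finset.card_pos.mpr ⟨_, hmem⟩
      omega
    rw [eq_of_no_inv hempty]
    exact Relation.EqvGen.refl τ
  | succ N ih =>
    intro σ τ hcard hrec
    set F := (Finset.univ : Finset (Fin n × Fin n)).filter
        (fun pr => pr.1 < pr.2 ∧ τ.symm (σ pr.2) < τ.symm (σ pr.1)) with hF
    by_cases h0 : F.card = 0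
    · have hempty : ∀ p q : Fin n, p < q → ¬ τ.symm (σ q) < τ.symm (σ p) := by
        intro p q hpq hlt
        have hmem : (p, q) ∈ F := by simp [hF, hpq, hlt]
        have := Finset.card_pos.mpr ⟨_, hmem⟩
        omega
      rw [eq_of_no_inv hempty]
      exact Relation.EqvGen.refl τ
    -- F nonempty: get some inversion
    obtain ⟨pr0, hpr0⟩ := Finset.card_pos.mp (Nat.pos_of_ne_zero h0)
    rw [hF, Finset.mem_filter] at hpr0
    obtain ⟨-, hpr0lt, hpr0inv⟩ := hpr0
    -- get an adjacent inversion
    have hadj : ∃ (i : ℕ) (hi : i + 1 < n),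
        τ.symm (σ ⟨i + 1, hi⟩) < τ.symm (σ ⟨i, Nat.lt_of_succ_lt hi⟩) := by
      by_contra hno
      push_neg at hno
      have hn : n ≠ 0 := by
        intro h; exact absurd pr0.1.2 (by omega)
      obtain ⟨m, rfl⟩ := Nat.exists_eq_succ_of_ne_zero hn
      have hmono : StrictMono (fun p : Fin (m + 1) => τ.symm (σ p)) := by
        rw [Fin.strictMono_iff_lt_succ]
        intro j
        have hj1 : (j : ℕ) + 1 < m + 1 := by omega
        have e1 : Fin.castSucc j = (⟨(j : ℕ), Nat.lt_of_succ_lt hj1⟩ : Fin (m + 1)) :=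
          Fin.ext (by simp)
        have e2 : Fin.succ j = (⟨(j : ℕ) + 1, hj1⟩ : Fin (m + 1)) := Fin.ext (by simp)
        rw [e1, e2]
        have hle := hno (j : ℕ) hj1
        have hne : τ.symm (σ (⟨(j : ℕ), Nat.lt_of_succ_lt hj1⟩ : Fin (m + 1))) ≠
            τ.symm (σ (⟨(j : ℕ) + 1, hj1⟩ : Fin (m + 1))) := by
          intro hcon
          have := σ.injective (τ.symm.injective hcon)
          simp [Fin.ext_iff] at this
        exact lt_of_le_of_ne hle hne
      exact absurd (hmono hpr0lt) (not_lt.mpr (le_of_lt hpr0inv))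
    obtain ⟨i, hi, hinv⟩ := hadj
    set p : Fin n := ⟨i, Nat.lt_of_succ_lt hi⟩ with hpdef
    set q : Fin n := ⟨i + 1, hi⟩ with hqdef
    have hqp : (q : ℕ) = (p : ℕ) + 1 := rfl
    have hpq : p < q := by simp [Fin.lt_def, hpdef, hqdef]
    -- the swapped values differ by at least k
    have hval : (σ p : ℕ) + k ≤ (σ q : ℕ) ∨ (σ q : ℕ) + k ≤ (σ p : ℕ) := by
      by_contra hcon
      push_neg at hcon
      have hne : (σ p : ℕ) ≠ (σ q : ℕ) := by
        intro h
        have : σ p = σ q := Fin.ext h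
        have := σ.injective this
        simp [hpdef, hqdef, Fin.ext_iff] at this
      rcases lt_or_gt_of_ne hne with hlt | hgt
      · have := hrec (σ p) (σ q) hlt (by omega)
        simp only [Equiv.symm_apply_apply] at this
        exact absurd (this.mp hpq) (not_lt.mpr (le_of_lt hinv))
      · have := hrec (σ q) (σ p) hgt (by omega)
        simp only [Equiv.symm_apply_apply] at this
        exact absurd (this.mpr hinv) (not_lt.mpr (le_of_lt hpq))
    set τ' := σ * Equiv.swap p q with hτ'
    have hA : adjSwapRel k τ' σ := ⟨i, hi, hval, rfl⟩
    have hrec' : recoilEquiv k n τ' τ := by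
      intro a b h1 h2
      exact ((recoil_of_adjSwap hk hA a b h1 h2).symm).trans (hrec a b h1 h2)
    -- cardinal drop
    have hmemF : (p, q) ∈ F := by simp [hF, hpq, hinv]
    have hcard' : ((Finset.univ : Finset (Fin n × Fin n)).filter
        (fun pr => pr.1 < pr.2 ∧ τ.symm (τ' pr.2) < τ.symm (τ' pr.1))).card ≤ N := by
      have hsub : ((Finset.univ : Finset (Fin n × Fin n)).filter
          (fun pr => pr.1 < pr.2 ∧ τ.symm (τ' pr.2) < τ.symm (τ' pr.1))).card ≤
          (F.erase (p, q)).card := by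
        apply Finset.card_le_card_of_injOn
          (fun pr => (Equiv.swap p q pr.1, Equiv.swap p q pr.2))
        · intro pr hpr
          rw [Finset.mem_coe, Finset.mem_filter] at hpr
          obtain ⟨-, hlt, hinv'⟩ := hpr
          have hτ'app : ∀ x, τ' x = σ (Equiv.swap p q x) := fun x => rfl
          rw [hτ'app, hτ'app] at hinv'
          have hne1 : ¬(pr.1 = p ∧ pr.2 = q) := by
            rintro ⟨e1, e2⟩
            rw [e1, e2, Equiv.swap_apply_left, Equiv.swap_apply_right] at hinv'
            exact absurd hinv' (not_lt.mpr (le_of_lt hinv))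
          rw [Finset.mem_coe, Finset.mem_erase]
          constructor
          · intro hcon
            have e1 : Equiv.swap p q pr.1 = p := congrArg Prod.fst hcon
            have e2 : Equiv.swap p q pr.2 = q := congrArg Prod.snd hcon
            have f1 : pr.1 = q := by
              have := congrArg (Equiv.swap p q) e1
              simpa using this
            have f2 : pr.2 = p := by
              have := congrArg (Equiv.swap p q) e2
              simpa using this
            rw [f1, f2] at hlt
            exact absurd hlt (not_lt.mpr (le_of_lt hpq))
          · rw [hF, Finset.mem_filter]
            exact ⟨Finset.mem_univ _, swap_adj_lt hqp hlt hne1, hinv'⟩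
        · intro a _ b _ hab
          have e1 : Equiv.swap p q a.1 = Equiv.swap p q b.1 := congrArg Prod.fst hab
          have e2 : Equiv.swap p q a.2 = Equiv.swap p q b.2 := congrArg Prod.snd hab
          exact Prod.ext ((Equiv.swap p q).injective e1) ((Equiv.swap p q).injective e2)
      have := Finset.card_erase_of_mem hmemF
      omega
    have hstep := ih τ' τ hcard' hrec'
    exact Relation.EqvGen.trans σ τ' τ
      (Relation.EqvGen.symm τ' σ (Relation.EqvGen.rel τ' σ hA)) hstep

/-- `σ ≡_k τ` iff one can go from `σ` to `τ` by successively
exchanging adjacent entries whose values differ by at least `k`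
(reflexive–transitive–symmetric closure of the exchange relation). -/
theorem recoil_iff_adjSwaps (k n : ℕ) (hk : 2 ≤ k) (σ τ : Equiv.Perm (Fin n)) :
    recoilEquiv k n σ τ ↔ Relation.EqvGen (adjSwapRel k) σ τ := by
  constructor
  · intro h
    exact key k hk _ σ τ le_rfl h
  · intro h
    induction h with
    | rel x y hxy =>
      exact fun a b h1 h2 => (recoil_of_adjSwap hk hxy a b h1 h2).symm
    | refl x => exact fun a b h1 h2 => Iff.rfl
    | symm x y _ ihh => exact fun a b h1 h2 => (ihh a b h1 h2).symm
    | trans x y z _ _ ih1 ih2 =>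
      exact fun a b h1 h2 => (ih1 a b h1 h2).trans (ih2 a b h1 h2)
end

section
/- Let k ≥ 2 and n ≥ 0. Every equivalence class of ≡_k on S_n contains exactly one k-minimal permutation α, and this α satisfies Inv(α) ⊆ Inv(σ) for every σ in the class (it is the minimum of the class for the right weak order). -/
-- aux
lemma recoil_refl (k n : ℕ) (σ : Equiv.Perm (Fin n)) : recoilEquiv k n σ σ :=
  fun _ _ _ _ => Iff.rfl

lemma recoil_symm {k n : ℕ} {σ τ : Equiv.Perm (Fin n)} (h : recoilEquiv k n σ τ) :
    recoilEquiv k n τ σ := fun a b h1 h2 => (h a b h1 h2).symm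

lemma recoil_trans {k n : ℕ} {σ τ ρ : Equiv.Perm (Fin n)} (h : recoilEquiv k n σ τ)
    (h' : recoilEquiv k n τ ρ) : recoilEquiv k n σ ρ :=
  fun a b h1 h2 => (h a b h1 h2).trans (h' a b h1 h2)

def invFinset {n : ℕ} (σ : Equiv.Perm (Fin n)) : Finset (Fin n × Fin n) :=
  Finset.univ.filter (fun p => p.1 < p.2 ∧ σ.symm p.2 < σ.symm p.1)

lemma mem_invFinset {n : ℕ} (σ : Equiv.Perm (Fin n)) (p : Fin n × Fin n) :
    p ∈ invFinset σ ↔ p ∈ invSet σ := by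
  simp [invFinset, invSet]

-- permutation determined by relative order comparisons
lemma perm_eq_of_cmp {n : ℕ} (σ τ : Equiv.Perm (Fin n))
    (h : ∀ a b : Fin n, σ.symm a < σ.symm b ↔ τ.symm a < τ.symm b) : σ = τ := by
  have hmono : StrictMono (fun p : Fin n => τ.symm (σ p)) := by
    intro p q hpq
    have := (h (σ p) (σ q)).mp (by simpa using hpq)
    simpa using this
  have hid : (fun p : Fin n => τ.symm (σ p)) = id := by
    apply (StrictMono.range_inj hmono strictMono_id).mp
    rw [Set.range_id]
    exact Set.range_eq_univ.mpr (σ.trans τ.symm).surjective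
  ext p
  have := congrFun hid p
  simp only [id] at this
  rw [show σ p = τ (τ.symm (σ p)) from (τ.apply_symm_apply _).symm, this]

lemma swap_adj_lt_iff_s4 {n : ℕ} (i₀ i₁ p q : Fin n) (hadj : (i₀ : ℕ) + 1 = i₁)
    (h1 : ¬(p = i₀ ∧ q = i₁)) (h2 : ¬(p = i₁ ∧ q = i₀)) :
    Equiv.swap i₀ i₁ p < Equiv.swap i₀ i₁ q ↔ p < q := by
  simp only [Equiv.swap_apply_def, Fin.lt_def]
  split_ifs <;> simp_all [Fin.ext_iff] <;> omega

lemma not_min_step {k n : ℕ} (hk : 2 ≤ k) (σ : Equiv.Perm (Fin n))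
    (h : ¬ kMinimal k σ) :
    ∃ τ, recoilEquiv k n σ τ ∧ (invFinset τ).card < (invFinset σ).card := by
  rw [kMinimal, not_not] at h
  obtain ⟨i, hi, hdesc⟩ := h
  set i₀ : Fin n := ⟨i, Nat.lt_of_succ_lt hi⟩
  set i₁ : Fin n := ⟨i + 1, hi⟩
  have hadj : (i₀ : ℕ) + 1 = i₁ := rfl
  set s := Equiv.swap i₀ i₁ with hs_def
  have hsymm : ∀ v, (σ * s).symm v = s (σ.symm v) := by
    intro v
    simp [hs_def, Equiv.Perm.mul_def, Equiv.swap_inv]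
  refine ⟨σ * s, ?_, ?_⟩
  · intro a b hab hgap
    rw [hsymm, hsymm]
    have hne1 : ¬(σ.symm a = i₀ ∧ σ.symm b = i₁) := by
      rintro ⟨ha, hb⟩
      have ea : a = σ i₀ := by rw [← ha, Equiv.apply_symm_apply]
      have eb : b = σ i₁ := by rw [← hb, Equiv.apply_symm_apply]
      have ea' : (a : ℕ) = σ i₀ := by rw [ea]
      have eb' : (b : ℕ) = σ i₁ := by rw [eb]
      omega
    have hne2 : ¬(σ.symm a = i₁ ∧ σ.symm b = i₀) := by
      rintro ⟨ha, hb⟩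
      have ea : a = σ i₁ := by rw [← ha, Equiv.apply_symm_apply]
      have eb : b = σ i₀ := by rw [← hb, Equiv.apply_symm_apply]
      have ea' : (a : ℕ) = σ i₁ := by rw [ea]
      have eb' : (b : ℕ) = σ i₀ := by rw [eb]
      omega
    exact (swap_adj_lt_iff_s4 i₀ i₁ (σ.symm a) (σ.symm b) hadj hne1 hne2).symm
  · apply Finset.card_lt_card
    rw [Finset.ssubset_iff_of_subset]
    · refine ⟨(σ i₁, σ i₀), ?_, ?_⟩
      · simp only [invFinset, Finset.mem_filter, Finset.mem_univ, true_and]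
        refine ⟨Fin.lt_def.mpr (by omega), ?_⟩
        simp only [Equiv.symm_apply_apply]
        exact Fin.lt_def.mpr (by omega)
      · simp only [invFinset, Finset.mem_filter, Finset.mem_univ, true_and, not_and]
        intro _
        rw [hsymm, hsymm]
        simp only [Equiv.symm_apply_apply]
        rw [Equiv.swap_apply_left, Equiv.swap_apply_right]
        exact not_lt.mpr (Fin.le_def.mpr (by omega))
    · intro p hp
      simp only [invFinset, Finset.mem_filter, Finset.mem_univ, true_and] at hp ⊢
      obtain ⟨hlt, hinv⟩ := hp
      refine ⟨hlt, ?_⟩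
      rw [hsymm, hsymm] at hinv
      by_cases hc1 : σ.symm p.2 = i₀ ∧ σ.symm p.1 = i₁
      · rw [hc1.1, hc1.2]
        exact Fin.lt_def.mpr (by omega)
      · by_cases hc2 : σ.symm p.2 = i₁ ∧ σ.symm p.1 = i₀
        · exfalso
          have e2 : p.2 = σ i₁ := by rw [← hc2.1, Equiv.apply_symm_apply]
          have e1 : p.1 = σ i₀ := by rw [← hc2.2, Equiv.apply_symm_apply]
          have e2' : (p.2 : ℕ) = σ i₁ := by rw [e2]
          have e1' : (p.1 : ℕ) = σ i₀ := by rw [e1]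
          have := Fin.lt_def.mp hlt
          omega
        · exact (swap_adj_lt_iff_s4 i₀ i₁ (σ.symm p.2) (σ.symm p.1) hadj hc1 hc2).mp hinv

lemma exists_kMinimal {k n : ℕ} (hk : 2 ≤ k) (σ : Equiv.Perm (Fin n)) :
    ∃ α, recoilEquiv k n σ α ∧ kMinimal k α := by
  generalize hN : (invFinset σ).card = N
  induction N using Nat.strong_induction_on generalizing σ with
  | _ N ih =>
    by_cases hm : kMinimal k σ
    · exact ⟨σ, recoil_refl k n σ, hm⟩
    · obtain ⟨τ, h1, h2⟩ := not_min_step hk σ hm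
      obtain ⟨α, ha1, ha2⟩ := ih _ (hN ▸ h2) τ rfl
      exact ⟨α, recoil_trans h1 ha1, ha2⟩

lemma kMinimal_inv_subset {k n : ℕ} (hk : 2 ≤ k) {α τ : Equiv.Perm (Fin n)}
    (hmin : kMinimal k α) (heq : recoilEquiv k n α τ) : invSet α ⊆ invSet τ := by
  have H : ∀ g : ℕ, ∀ a b : Fin n, (b : ℕ) - a = g → a < b →
      α.symm b < α.symm a → τ.symm b < τ.symm a := by
    intro g
    induction g using Nat.strong_induction_on with
    | _ g ih =>
      intro a b hg hab hinv
      by_cases hsmall : (b : ℕ) - a < k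
      · have hiff := heq a b (Fin.lt_def.mp hab) hsmall
        have h1 : ¬ τ.symm a < τ.symm b := by
          intro hc
          exact absurd (hiff.mpr hc) (not_lt.mpr (le_of_lt hinv))
        have hne : τ.symm b ≠ τ.symm a := by
          intro e
          exact absurd (τ.symm.injective e) (ne_of_gt hab)
        exact lt_of_le_of_ne (not_lt.mp h1) hne
      · set p := α.symm b with hp_def
        set q := α.symm a with hq_def
        have hpq : p < q := hinv
        have hαq : α q = a := α.apply_symm_apply a
        have hαp : α p = b := α.apply_symm_apply b
        set S := Finset.univ.filter (fun j : Fin n => p < j ∧ j ≤ q ∧ (α j : ℕ) ≤ a)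
          with hS_def
        have hqS : q ∈ S := by
          simp only [hS_def, Finset.mem_filter, Finset.mem_univ, true_and]
          exact ⟨hpq, le_refl q, by rw [hαq]⟩
        have hSne : S.Nonempty := ⟨q, hqS⟩
        set i := S.min' hSne with hi_def
        have hiS : i ∈ S := S.min'_mem hSne
        simp only [hS_def, Finset.mem_filter, Finset.mem_univ, true_and] at hiS
        obtain ⟨hpi, hiq, hia⟩ := hiS
        have hpi' : (p : ℕ) < i := Fin.lt_def.mp hpi
        have hiq' : (i : ℕ) ≤ q := Fin.le_def.mp hiq
        set j : Fin n := ⟨(i : ℕ) - 1, by omega⟩ with hj_def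
        have hji : (j : ℕ) + 1 = (i : ℕ) := by simp [hj_def]; omega
        -- α j > a
        have hja : (a : ℕ) < α j := by
          by_contra hle
          push_neg at hle
          by_cases hjp : j = p
          · have : α j = b := by rw [hjp, hαp]
            have : (α j : ℕ) = b := by rw [this]
            have := Fin.lt_def.mp hab
            omega
          · have hpj : p < j := by
              rw [Fin.lt_def]
              have : (p : ℕ) ≠ (j : ℕ) := fun e => hjp (Fin.ext e.symm)
              simp only [hj_def]
              omega
            have hjS : j ∈ S := by
              simp only [hS_def, Finset.mem_filter, Finset.mem_univ, true_and]
              exact ⟨hpj, Fin.le_def.mpr (by simp [hj_def]; omega), hle⟩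
            have := S.min'_le j hjS
            have := Fin.le_def.mp this
            simp only [hj_def] at this
            omega
        -- kMinimal at position j
        have hkm : (α i : ℕ) + k > (α j : ℕ) := by
          by_contra hc
          push_neg at hc
          apply hmin
          refine ⟨(j : ℕ), by omega, ?_⟩
          have e1 : (⟨(j : ℕ) + 1, by omega⟩ : Fin n) = i := Fin.ext (by simpa using hji)
          have e2 : (⟨(j : ℕ), by omega⟩ : Fin n) = j := Fin.ext rfl
          rw [e1, e2]
          exact hc
        set c := α j with hc_def
        have hsymc : α.symm c = j := α.symm_apply_apply j
        have hab' : (a : ℕ) < b := Fin.lt_def.mp hab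
        have hakb : (a : ℕ) + k ≤ b := by omega
        have hcb : (c : ℕ) < b := by omega
        have hcval : (a : ℕ) < c := hja
        -- position facts
        have hjp2 : p < j := by
          rw [Fin.lt_def]
          have : j ≠ p := by
            intro e
            have : (c : ℕ) = b := by rw [hc_def, e, hαp]
            omega
          have : (p : ℕ) ≠ j := fun e => this (Fin.ext e.symm)
          simp only [hj_def] at *
          omega
        have hjq : j < q := Fin.lt_def.mpr (by simp only [hj_def]; omega)
        -- two smaller inversions
        have inv1 : τ.symm b < τ.symm c := by
          apply ih ((b : ℕ) - c) (by omega) c b rfl (Fin.lt_def.mpr hcb)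
          rw [hsymc, ← hp_def]
          exact hjp2
        have inv2 : τ.symm c < τ.symm a := by
          apply ih ((c : ℕ) - a) (by omega) a c rfl (Fin.lt_def.mpr hcval)
          rw [hsymc, ← hq_def]
          exact hjq
        exact inv1.trans inv2
  intro x hx
  exact ⟨hx.1, H ((x.2 : ℕ) - x.1) x.1 x.2 rfl hx.1 hx.2⟩

lemma eq_of_invSet_eq {n : ℕ} {γ δ : Equiv.Perm (Fin n)} (hset : invSet γ = invSet δ) :
    γ = δ := by
  apply perm_eq_of_cmp
  have key : ∀ a b : Fin n, a < b → (γ.symm a < γ.symm b ↔ δ.symm a < δ.symm b) := by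
    intro a b hab
    have h1 : ((a, b) ∈ invSet γ) ↔ ((a, b) ∈ invSet δ) := by rw [hset]
    simp only [invSet, Set.mem_setOf_eq, hab, true_and] at h1
    have h2 : γ.symm a ≠ γ.symm b := fun e => absurd (γ.symm.injective e) hab.ne
    have h3 : δ.symm a ≠ δ.symm b := fun e => absurd (δ.symm.injective e) hab.ne
    constructor <;> intro hlt
    · rcases lt_or_gt_of_ne h3 with h | h
      · exact h
      · exact absurd (h1.mpr h) (not_lt.mpr hlt.le)
    · rcases lt_or_gt_of_ne h2 with h | h
      · exact h
      · exact absurd (h1.mp h) (not_lt.mpr hlt.le)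
  intro a b
  rcases lt_trichotomy a b with h | h | h
  · exact key a b h
  · subst h; simp
  · constructor <;> intro hlt
    · by_contra hc
      push_neg at hc
      have h3 : δ.symm a ≠ δ.symm b := fun e => absurd (δ.symm.injective e) (ne_of_gt h)
      have hlt' : δ.symm b < δ.symm a := lt_of_le_of_ne hc (Ne.symm h3)
      exact absurd ((key b a h).mpr hlt') (not_lt.mpr hlt.le)
    · by_contra hc
      push_neg at hc
      have h2 : γ.symm a ≠ γ.symm b := fun e => absurd (γ.symm.injective e) (ne_of_gt h)
      have hlt' : γ.symm b < γ.symm a := lt_of_le_of_ne hc (Ne.symm h2)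
      exact absurd ((key b a h).mp hlt') (not_lt.mpr hlt.le)


/-- every `≡_k` class contains exactly one `k`-minimal
permutation `α`, and `α` is the minimum of the class for the right weak
order (`Inv(α) ⊆ Inv(σ)` for all `σ` in the class). -/
theorem recoil_class_unique_min (k n : ℕ) (hk : 2 ≤ k) (σ : Equiv.Perm (Fin n)) :
    ∃ α : Equiv.Perm (Fin n),
      recoilEquiv k n σ α ∧ kMinimal k α ∧
      (∀ τ, recoilEquiv k n σ τ → invSet α ⊆ invSet τ) ∧
      (∀ β, recoilEquiv k n σ β → kMinimal k β → β = α) := by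
  obtain ⟨α, hσα, hmin⟩ := exists_kMinimal hk σ
  refine ⟨α, hσα, hmin, ?_, ?_⟩
  · intro τ hστ
    exact kMinimal_inv_subset hk hmin (recoil_trans (recoil_symm hσα) hστ)
  · intro β hσβ hβmin
    have hβα : recoilEquiv k n β α := recoil_trans (recoil_symm hσβ) hσα
    have h1 : invSet β ⊆ invSet α := kMinimal_inv_subset hk hβmin hβα
    have h2 : invSet α ⊆ invSet β := kMinimal_inv_subset hk hmin (recoil_symm hβα)
    exact eq_of_invSet_eq (Set.Subset.antisymm h1 h2)
end

section
/- Let k ≥ 2 and n ≥ 0. For every k-descent class D = {σ ∈ S_n : DC_k(σ) = C} (for a fixed code C in the image of DC_k) there exist permutations α, ω ∈ D such that D = {σ ∈ S_n : Inv(α⁻¹) ⊆ Inv(σ⁻¹) ⊆ Inv(ω⁻¹)}; in other words, every k-descent class is an interval of the left weak order. -/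
/-! ### Auxiliary machinery -/

open Finset

section aux

/-- Any strict total order on `Fin n` is realized by the position comparison of
a permutation. -/
lemma exists_perm_of_sto {n : ℕ} (R : Fin n → Fin n → Prop)
    (htri : ∀ i j, i ≠ j → R i j ∨ R j i)
    (hasym : ∀ i j, R i j → ¬ R j i)
    (htrans : ∀ i j l, R i j → R j l → R i l) :
    ∃ π : Equiv.Perm (Fin n), ∀ i j, π i < π j ↔ R i j := by
  classical
  have hirr : ∀ i, ¬ R i i := fun i h => hasym i i h h
  have hcard : ∀ i : Fin n, (univ.filter (fun m => R m i)).card < n := by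
    intro i
    have h1 : (univ.filter (fun m => R m i)) ⊂ univ := by
      refine Finset.ssubset_univ_iff.mpr ?_
      intro h
      have : i ∈ univ.filter (fun m => R m i) := by rw [h]; exact mem_univ i
      exact hirr i (by simpa using this)
    simpa using Finset.card_lt_card h1
  set f : Fin n → Fin n := fun i => ⟨(univ.filter (fun m => R m i)).card, hcard i⟩ with hf
  have hmono : ∀ i j, R i j → f i < f j := by
    intro i j hij
    have hsub : insert i (univ.filter (fun m => R m i)) ⊆ univ.filter (fun m => R m j) := by
      intro m hm
      rcases Finset.mem_insert.mp hm with rfl | hm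
      · simp [hij]
      · simp only [mem_filter, mem_univ, true_and] at hm ⊢
        exact htrans m i j hm hij
    have : (univ.filter (fun m => R m i)).card + 1 ≤ (univ.filter (fun m => R m j)).card := by
      have := Finset.card_le_card hsub
      rwa [Finset.card_insert_of_notMem (by simp [hirr i])] at this
    exact Fin.mk_lt_mk.mpr (by omega)
  have hinj : Function.Injective f := by
    intro i j h
    by_contra hne
    rcases htri i j hne with h1 | h1
    · exact absurd h (ne_of_lt (hmono _ _ h1))
    · exact absurd h.symm (ne_of_lt (hmono _ _ h1))
  refine ⟨Equiv.ofBijective f (Finite.injective_iff_bijective.mp hinj), fun i j => ?_⟩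
  simp only [Equiv.ofBijective_apply]
  constructor
  · intro h
    have hne : i ≠ j := by rintro rfl; exact lt_irrefl _ h
    rcases htri i j hne with h1 | h1
    · exact h1
    · exact absurd (hmono _ _ h1) (fun h2 => lt_asymm h h2)
  · exact hmono i j

variable {n k : ℕ}

/-- A single constrained step. -/
def stepRel (k : ℕ) (v : Fin n → Fin n → Prop) (i j : Fin n) : Prop :=
  i < j ∧ (j : ℕ) - (i : ℕ) < k ∧ v i j

/-- The transitive closure of constrained steps. -/
def cl (k : ℕ) (v : Fin n → Fin n → Prop) : Fin n → Fin n → Prop :=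
  Relation.TransGen (stepRel k v)

section closure
variable (v : Fin n → Fin n → Prop)
variable (htr : ∀ a b c : Fin n, v a b → v b c → v a c)
variable (htri : ∀ a b : Fin n, a ≠ b → v a b ∨ v b a)

include htr in
lemma cl_lt_v {i j : Fin n} (h : cl k v i j) : i < j ∧ v i j := by
  induction h with
  | single h => exact ⟨h.1, h.2.2⟩
  | tail _ h ih => exact ⟨lt_trans ih.1 h.1, htr _ _ _ ih.2 h.2.2⟩

include htr htri in
lemma cl_cross {i l : Fin n} (h : cl k v i l) :
    ∀ j : Fin n, i < j → j < l → cl k v i j ∨ cl k v j l := by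
  induction h with
  | @single b h =>
    intro j hij hjl
    have e1 : (i : ℕ) < j := hij
    have e2 : (j : ℕ) < b := hjl
    have e3 : (b : ℕ) - i < k := h.2.1
    rcases htri i j (ne_of_lt hij) with hv | hv
    · exact Or.inl (Relation.TransGen.single ⟨hij, by omega, hv⟩)
    · exact Or.inr (Relation.TransGen.single ⟨hjl, by omega, htr _ _ _ hv h.2.2⟩)
  | @tail m b hm hstep ih =>
    intro j hij hjl
    rcases lt_trichotomy j m with hjm | rfl | hmj
    · rcases ih j hij hjm with h1 | h1
      · exact Or.inl h1
      · exact Or.inr (Relation.TransGen.tail h1 hstep)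
    · exact Or.inl hm
    · have e1 : (m : ℕ) < j := hmj
      have e2 : (j : ℕ) < b := hjl
      have e3 : (b : ℕ) - m < k := hstep.2.1
      rcases htri m j (ne_of_lt hmj) with hv | hv
      · exact Or.inl (Relation.TransGen.tail hm ⟨hmj, by omega, hv⟩)
      · exact Or.inr (Relation.TransGen.single ⟨hjl, by omega, htr _ _ _ hv hstep.2.2⟩)

/-- the order relation whose inversion set (for `a<b`) is exactly `cl k v`. -/
def ordRel (k : ℕ) (v : Fin n → Fin n → Prop) (i j : Fin n) : Prop :=
  (i < j ∧ ¬ cl k v i j) ∨ (j < i ∧ cl k v j i)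

include htr htri in
lemma ordRel_trans : ∀ a b c : Fin n, ordRel k v a b → ordRel k v b c → ordRel k v a c := by
  intro i j l hij hjl
  rcases hij with ⟨h1, h2⟩ | ⟨h1, h2⟩ <;> rcases hjl with ⟨h3, h4⟩ | ⟨h3, h4⟩
  · left
    refine ⟨lt_trans h1 h3, fun hc => ?_⟩
    rcases cl_cross v htr htri hc j h1 h3 with h | h
    exacts [h2 h, h4 h]
  · rcases lt_trichotomy i l with hil | rfl | hli
    · left
      exact ⟨hil, fun hc => h2 (Relation.TransGen.trans hc h4)⟩
    · exact absurd h4 h2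
    · right
      refine ⟨hli, ?_⟩
      rcases cl_cross v htr htri h4 i hli h1 with h | h
      · exact h
      · exact absurd h h2
  · rcases lt_trichotomy i l with hil | rfl | hli
    · left
      refine ⟨hil, fun hc => h4 (Relation.TransGen.trans h2 hc)⟩
    · exact absurd h2 h4
    · right
      rcases cl_cross v htr htri h2 l h3 hli with h | h
      · exact absurd h h4
      · exact ⟨hli, h⟩
  · exact Or.inr ⟨lt_trans h3 h1, Relation.TransGen.trans h4 h2⟩

lemma ordRel_asymm : ∀ a b : Fin n, ordRel k v a b → ¬ ordRel k v b a := by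
  intro a b h1 h2
  rcases h1 with ⟨h1, h2'⟩ | ⟨h1, h2'⟩ <;> rcases h2 with ⟨h3, h4⟩ | ⟨h3, h4⟩
  · exact absurd h3 (asymm h1)
  · exact h2' h4
  · exact h4 h2'
  · exact absurd h3 (asymm h1)

lemma ordRel_tri : ∀ a b : Fin n, a ≠ b → ordRel k v a b ∨ ordRel k v b a := by
  intro a b hne
  rcases lt_or_gt_of_ne hne with h | h
  · by_cases hc : cl k v a b
    · exact Or.inr (Or.inr ⟨h, hc⟩)
    · exact Or.inl (Or.inl ⟨h, hc⟩)
  · by_cases hc : cl k v b a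
    · exact Or.inl (Or.inr ⟨h, hc⟩)
    · exact Or.inr (Or.inl ⟨h, hc⟩)

end closure

/-- The essential (σ-dependent) part of the descent code. -/
def gDC (k : ℕ) {n : ℕ} (σ : Equiv.Perm (Fin n)) (ℓ : Fin n) : ℕ :=
  (univ.filter fun m : Fin n => (ℓ : ℕ) < (m : ℕ) + k ∧ m ≤ ℓ ∧ σ m ≤ σ ℓ).card

lemma extPerm_pos (σ : Equiv.Perm (Fin n)) (j : ℤ) (h1 : 0 < j) (h2 : j ≤ n) :
    extPerm σ j = (σ ⟨(j - 1).toNat, by omega⟩ : ℤ) + 1 := by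
  rw [extPerm, dif_pos ⟨h1, h2⟩]

lemma extPerm_last (σ : Equiv.Perm (Fin n)) (ℓ : Fin n) :
    extPerm σ ((ℓ : ℤ) + 1) = (σ ℓ : ℤ) + 1 := by
  have h1 : (0 : ℤ) < (ℓ : ℤ) + 1 := by positivity
  have h2 : (ℓ : ℤ) + 1 ≤ n := by
    have := ℓ.isLt; omega
  rw [extPerm_pos σ _ h1 h2]
  simp only [add_sub_cancel_right, Int.toNat_natCast, Fin.eta]

lemma DC_apply (k : ℕ) (σ : Equiv.Perm (Fin n)) (ℓ : Fin n) :
    DC k σ ℓ = (Finset.Icc ((ℓ : ℤ) + 2 - k) 0).card + gDC k σ ℓ := by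
  classical
  have hl := extPerm_last σ ℓ
  have hlt := ℓ.isLt
  rw [DC]
  set P : ℤ → Prop := fun j => extPerm σ j ≤ extPerm σ ((ℓ : ℤ) + 1) with hP
  set s := Finset.Icc ((ℓ : ℤ) + 1 - k + 1) ((ℓ : ℤ) + 1) with hs
  rw [← Finset.card_filter_add_card_filter_not (p := fun j => j ≤ 0)
    (s := s.filter P)]
  congr 1
  · -- nonpositive part
    have : (s.filter P).filter (fun j => j ≤ 0) = Finset.Icc ((ℓ : ℤ) + 2 - k) 0 := by
      ext j
      simp only [Finset.mem_filter, Finset.mem_Icc, hs, hP]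
      constructor
      · rintro ⟨⟨⟨ha, hb⟩, _⟩, hj0⟩
        exact ⟨by omega, hj0⟩
      · rintro ⟨ha, hj0⟩
        have hext : extPerm σ j = j := by
          rw [extPerm, dif_neg (by omega)]
        refine ⟨⟨⟨by omega, by omega⟩, ?_⟩, hj0⟩
        rw [hext, hl]
        have : (0:ℤ) ≤ (σ ℓ : ℤ) := by positivity
        omega
    rw [this]
  · -- positive part
    refine Finset.card_bij' (fun (j : ℤ) (hj : j ∈ (s.filter P).filter (fun j => ¬ j ≤ 0)) =>
        (⟨(j - 1).toNat, by
          simp only [hs, hP, Finset.mem_filter, Finset.mem_Icc] at hj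
          omega⟩ : Fin n))
      (fun (m : Fin n) _ => (m : ℤ) + 1) ?_ ?_ ?_ ?_
    · -- hi : image in target
      intro a ha
      have ha' := ha
      simp only [hs, hP, Finset.mem_filter, Finset.mem_Icc] at ha'
      obtain ⟨⟨⟨hab, hae⟩, hPa⟩, hapos⟩ := ha'
      have hext : extPerm σ a = (σ ⟨(a - 1).toNat, by omega⟩ : ℤ) + 1 :=
        extPerm_pos σ a (by omega) (by omega)
      rw [hext, hl] at hPa
      simp only [Finset.mem_filter, Finset.mem_univ, true_and]
      refine ⟨by omega, by
        rw [Fin.le_def]; simp only []; omega, ?_⟩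
      rw [Fin.le_def]
      have : ((σ ⟨(a - 1).toNat, by omega⟩ : Fin n) : ℤ) ≤ (σ ℓ : ℤ) := by omega
      exact_mod_cast this
    · -- hj : inverse image in source
      intro m hm
      simp only [Finset.mem_filter, Finset.mem_univ, true_and] at hm
      obtain ⟨h1, h2, h3⟩ := hm
      have hm2 : ((m : ℕ) : ℤ) + 1 ≤ (ℓ : ℤ) + 1 := by
        have : (m : ℕ) ≤ (ℓ : ℕ) := h2
        omega
      have hext : extPerm σ ((m : ℤ) + 1) = (σ ⟨(((m : ℕ) : ℤ) + 1 - 1).toNat, by omega⟩ : ℤ) + 1 :=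
        extPerm_pos σ _ (by omega) (by omega)
      have hfin : (⟨(((m : ℕ) : ℤ) + 1 - 1).toNat, by omega⟩ : Fin n) = m := by
        apply Fin.ext
        simp
      rw [hfin] at hext
      simp only [hs, hP, Finset.mem_filter, Finset.mem_Icc]
      refine ⟨⟨⟨by omega, hm2⟩, ?_⟩, by omega⟩
      rw [hext, hl]
      have : ((σ m : Fin n) : ℤ) ≤ ((σ ℓ : Fin n) : ℤ) := by exact_mod_cast h3
      omega
    · -- left inverse
      intro a ha
      have ha' := ha
      simp only [hs, hP, Finset.mem_filter, Finset.mem_Icc] at ha'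
      simp only [Fin.val_mk]
      omega
    · -- right inverse
      intro m hm
      apply Fin.ext
      simp

section agree
variable (σ τ : Equiv.Perm (Fin n))

lemma g_eq_A (hk : 1 ≤ k) (j : Fin n) :
    gDC k σ j = (univ.filter fun m : Fin n =>
      m < j ∧ (j : ℕ) < (m : ℕ) + k ∧ σ m < σ j).card + 1 := by
  rw [gDC]
  have : (univ.filter fun m : Fin n => (j : ℕ) < (m : ℕ) + k ∧ m ≤ j ∧ σ m ≤ σ j)
      = insert j (univ.filter fun m : Fin n =>
        m < j ∧ (j : ℕ) < (m : ℕ) + k ∧ σ m < σ j) := by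
    ext m
    simp only [mem_filter, mem_univ, true_and, mem_insert]
    constructor
    · rintro ⟨h1, h2, h3⟩
      rcases eq_or_lt_of_le h2 with rfl | h2'
      · exact Or.inl rfl
      · refine Or.inr ⟨h2', h1, lt_of_le_of_ne h3 (fun h => ?_)⟩
        exact (ne_of_lt h2') (σ.injective h)
    · rintro (rfl | ⟨h1, h2, h3⟩)
      · exact ⟨by omega, le_refl _, le_refl _⟩
      · exact ⟨h2, le_of_lt h1, le_of_lt h3⟩
  rw [this, card_insert_of_notMem (by simp)]

lemma rank_iff_s8 (j i : Fin n) (hij : i < j) (hnear : (j : ℕ) - (i : ℕ) < k) :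
    (σ i < σ j ↔
      (univ.filter fun m : Fin n => m < j ∧ (j : ℕ) < (m : ℕ) + k ∧ σ m ≤ σ i).card ≤
      (univ.filter fun m : Fin n => m < j ∧ (j : ℕ) < (m : ℕ) + k ∧ σ m < σ j).card) := by
  constructor
  · intro h
    apply card_le_card
    intro m hm
    simp only [mem_filter, mem_univ, true_and] at hm ⊢
    exact ⟨hm.1, hm.2.1, lt_of_le_of_lt hm.2.2 h⟩
  · intro h
    by_contra hc
    have hlt : σ j < σ i := by
      rcases lt_trichotomy (σ i) (σ j) with h' | h' | h'
      · exact absurd h' hc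
      · exact absurd (σ.injective h') (ne_of_lt hij)
      · exact h'
    have hsub : insert i (univ.filter fun m : Fin n =>
        m < j ∧ (j : ℕ) < (m : ℕ) + k ∧ σ m < σ j) ⊆
        (univ.filter fun m : Fin n => m < j ∧ (j : ℕ) < (m : ℕ) + k ∧ σ m ≤ σ i) := by
      intro m hm
      rcases mem_insert.mp hm with rfl | hm
      · simp only [mem_filter, mem_univ, true_and]
        exact ⟨hij, by omega, le_refl _⟩
      · simp only [mem_filter, mem_univ, true_and] at hm ⊢
        exact ⟨hm.1, hm.2.1, le_of_lt (lt_trans hm.2.2 hlt)⟩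
    have hcard := card_le_card hsub
    rw [card_insert_of_notMem (by simp [hc])] at hcard
    omega

lemma agree_of_g (hk : 1 ≤ k) (hg : ∀ ℓ, gDC k σ ℓ = gDC k τ ℓ) :
    ∀ i j : Fin n, i < j → (j : ℕ) - (i : ℕ) < k → (σ i < σ j ↔ τ i < τ j) := by
  have main : ∀ L : ℕ, ∀ j : Fin n, (j : ℕ) = L → ∀ i : Fin n, i < j →
      (j : ℕ) - (i : ℕ) < k → (σ i < σ j ↔ τ i < τ j) := by
    intro L
    induction L using Nat.strong_induction_on with
    | _ L IH =>
    intro j hjL i hij hnear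
    have IH' : ∀ a b : Fin n, a < b → b < j → (b : ℕ) - (a : ℕ) < k →
        (σ a < σ b ↔ τ a < τ b) := by
      intro a b hab hbj hnab
      exact IH (b : ℕ) (by omega) b rfl a hab hnab
    have hAcard : (univ.filter fun m : Fin n =>
        m < j ∧ (j : ℕ) < (m : ℕ) + k ∧ σ m < σ j).card =
        (univ.filter fun m : Fin n =>
        m < j ∧ (j : ℕ) < (m : ℕ) + k ∧ τ m < τ j).card := by
      have h1 := g_eq_A σ hk j
      have h2 := g_eq_A τ hk j
      have h3 := hg j
      omega
    have hB : (univ.filter fun m : Fin n => m < j ∧ (j : ℕ) < (m : ℕ) + k ∧ σ m ≤ σ i)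
        = (univ.filter fun m : Fin n => m < j ∧ (j : ℕ) < (m : ℕ) + k ∧ τ m ≤ τ i) := by
      ext m
      simp only [mem_filter, mem_univ, true_and]
      refine and_congr_right fun h1 => and_congr_right fun h2 => ?_
      rcases lt_trichotomy m i with hmi | rfl | him
      · have hiff := IH' m i hmi hij (by omega)
        constructor
        · intro h
          exact le_of_lt (hiff.mp (lt_of_le_of_ne h
            (fun h' => (ne_of_lt hmi) (σ.injective h'))))
        · intro h
          exact le_of_lt (hiff.mpr (lt_of_le_of_ne h
            (fun h' => (ne_of_lt hmi) (τ.injective h'))))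
      · simp
      · have hiff := IH' i m him h1 (by omega)
        rw [← not_lt, ← not_lt, hiff]
    rw [rank_iff_s8 σ j i hij hnear, rank_iff_s8 τ j i hij hnear, hB, hAcard]
  intro i j hij hnear
  exact main (j : ℕ) j rfl i hij hnear

lemma g_of_agree
    (ha : ∀ i j : Fin n, i < j → (j : ℕ) - (i : ℕ) < k → (σ i < σ j ↔ τ i < τ j)) :
    ∀ ℓ, gDC k σ ℓ = gDC k τ ℓ := by
  intro ℓ
  rw [gDC, gDC]
  congr 1
  ext m
  simp only [mem_filter, mem_univ, true_and]
  refine and_congr_right fun h1 => and_congr_right fun h2 => ?_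
  rcases eq_or_lt_of_le h2 with rfl | h2'
  · simp
  · have hiff := ha m ℓ h2' (by omega)
    constructor
    · intro h
      exact le_of_lt (hiff.mp (lt_of_le_of_ne h (fun h' => (ne_of_lt h2') (σ.injective h'))))
    · intro h
      exact le_of_lt (hiff.mpr (lt_of_le_of_ne h (fun h' => (ne_of_lt h2') (τ.injective h'))))

/-- The key characterization: two permutations have the same `k`-descent code
iff they compare equally on all pairs of positions at distance `< k`. -/
lemma DC_eq_iff (hk : 1 ≤ k) :
    DC k τ = DC k σ ↔
      ∀ i j : Fin n, i < j → (j : ℕ) - (i : ℕ) < k → (σ i < σ j ↔ τ i < τ j) := by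
  constructor
  · intro h
    apply agree_of_g σ τ hk
    intro ℓ
    have h1 := DC_apply k σ ℓ
    have h2 := DC_apply k τ ℓ
    have h3 : DC k τ ℓ = DC k σ ℓ := by rw [h]
    omega
  · intro ha
    funext ℓ
    have hg := g_of_agree σ τ ha ℓ
    rw [DC_apply, DC_apply, hg]

end agree

lemma invSet_inv_mem {n : ℕ} (τ : Equiv.Perm (Fin n)) (p : Fin n × Fin n) :
    p ∈ invSet τ⁻¹ ↔ p.1 < p.2 ∧ τ p.2 < τ p.1 := by
  have : (τ⁻¹ : Equiv.Perm (Fin n)).symm = τ := rfl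
  rw [invSet, Set.mem_setOf_eq, this]

end aux

/-- every `k`-descent class is an interval of the left weak
order: for the class of permutations having the same `k`-descent code as `σ`,
there are `α, ω` in the class such that the class is exactly
`{τ : Inv(α⁻¹) ⊆ Inv(τ⁻¹) ⊆ Inv(ω⁻¹)}`. -/
theorem descent_class_is_interval (k n : ℕ) (hk : 2 ≤ k)
    (σ : Equiv.Perm (Fin n)) :
    ∃ α ω : Equiv.Perm (Fin n), DC k α = DC k σ ∧ DC k ω = DC k σ ∧
      ∀ τ, DC k τ = DC k σ ↔
        (invSet α⁻¹ ⊆ invSet τ⁻¹ ∧ invSet τ⁻¹ ⊆ invSet ω⁻¹) := by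
  classical
  have hk1 : 1 ≤ k := by omega
  -- the two "value comparison" relations
  set vL : Fin n → Fin n → Prop := fun i j => σ j < σ i with hvL
  set vH : Fin n → Fin n → Prop := fun i j => σ i < σ j with hvH
  have htrL : ∀ a b c : Fin n, vL a b → vL b c → vL a c := fun a b c h1 h2 => lt_trans h2 h1
  have htrH : ∀ a b c : Fin n, vH a b → vH b c → vH a c := fun a b c h1 h2 => lt_trans h1 h2
  have htriL : ∀ a b : Fin n, a ≠ b → vL a b ∨ vL b a := by
    intro a b hne
    rcases lt_trichotomy (σ a) (σ b) with h | h | h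
    · exact Or.inr h
    · exact absurd (σ.injective h) hne
    · exact Or.inl h
  have htriH : ∀ a b : Fin n, a ≠ b → vH a b ∨ vH b a := by
    intro a b hne
    rcases htriL a b hne with h | h
    · exact Or.inr h
    · exact Or.inl h
  -- α realizes ordRel k vL
  obtain ⟨α, hα⟩ := exists_perm_of_sto (ordRel k vL)
    (ordRel_tri vL) (ordRel_asymm vL) (ordRel_trans vL htrL htriL)
  -- ω realizes the reverse of ordRel k vH
  obtain ⟨ω, hω⟩ := exists_perm_of_sto (fun a b => ordRel k vH b a)
    (fun i j hne => (ordRel_tri (k := k) vH j i (Ne.symm hne)))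
    (fun i j h1 h2 => ordRel_asymm vH j i h1 h2)
    (fun i j l h1 h2 => ordRel_trans vH htrH htriH l j i h2 h1)
  -- inversion facts for α and ω
  have hαinv : ∀ i j : Fin n, i < j → (α j < α i ↔ cl k vL i j) := by
    intro i j hij
    rw [hα]
    constructor
    · rintro (⟨h1, h2⟩ | ⟨h1, h2⟩)
      · exact absurd h1 (asymm hij)
      · exact h2
    · intro h
      exact Or.inr ⟨hij, h⟩
  have hωinv : ∀ i j : Fin n, i < j → (ω j < ω i ↔ ¬ cl k vH i j) := by
    intro i j hij
    rw [hω]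
    constructor
    · rintro (⟨h1, h2⟩ | ⟨h1, h2⟩)
      · exact h2
      · exact absurd h1 (asymm hij)
    · intro h
      exact Or.inl ⟨hij, h⟩
  -- α agrees with σ on near pairs
  have hαagree : ∀ i j : Fin n, i < j → (j : ℕ) - (i : ℕ) < k → (σ i < σ j ↔ α i < α j) := by
    intro i j hij hnear
    constructor
    · intro h
      rcases lt_trichotomy (α i) (α j) with h' | h' | h'
      · exact h'
      · exact absurd (α.injective h') (ne_of_lt hij)
      · exfalso
        have := (hαinv i j hij).mp h'
        exact asymm h ((cl_lt_v vL htrL this).2)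
    · intro h
      rcases lt_trichotomy (σ i) (σ j) with h' | h' | h'
      · exact h'
      · exact absurd (σ.injective h') (ne_of_lt hij)
      · exfalso
        have : cl k vL i j := Relation.TransGen.single ⟨hij, hnear, h'⟩
        exact asymm h ((hαinv i j hij).mpr this)
  -- ω agrees with σ on near pairs
  have hωagree : ∀ i j : Fin n, i < j → (j : ℕ) - (i : ℕ) < k → (σ i < σ j ↔ ω i < ω j) := by
    intro i j hij hnear
    constructor
    · intro h
      rcases lt_trichotomy (ω i) (ω j) with h' | h' | h'
      · exact h'
      · exact absurd (ω.injective h') (ne_of_lt hij)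
      · exfalso
        exact ((hωinv i j hij).mp h') (Relation.TransGen.single ⟨hij, hnear, h⟩)
    · intro h
      rcases lt_trichotomy (σ i) (σ j) with h' | h' | h'
      · exact h'
      · exact absurd (σ.injective h') (ne_of_lt hij)
      · exfalso
        have hncl : ¬ cl k vH i j := fun hc => asymm h' ((cl_lt_v vH htrH hc).2)
        exact asymm h ((hωinv i j hij).mpr hncl)
  refine ⟨α, ω, (DC_eq_iff σ α hk1).mpr hαagree, (DC_eq_iff σ ω hk1).mpr hωagree, fun τ => ?_⟩
  constructor
  · -- class membership implies sandwich
    intro hτ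
    have hagree := (DC_eq_iff σ τ hk1).mp hτ
    constructor
    · -- invSet α⁻¹ ⊆ invSet τ⁻¹
      intro p hp
      rw [invSet_inv_mem] at hp ⊢
      obtain ⟨h1, h2⟩ := hp
      refine ⟨h1, ?_⟩
      have hcl : cl k vL p.1 p.2 := (hαinv p.1 p.2 h1).mp h2
      clear h2
      -- cl k vL i j → τ j < τ i
      have : ∀ a b : Fin n, cl k vL a b → τ b < τ a := by
        intro a b h
        induction h with
        | single h =>
          obtain ⟨hab, hnab, hv⟩ := h
          have hiff := hagree a _ hab hnab
          rcases lt_trichotomy (τ a) (τ _) with h' | h' | h'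
          · exact absurd (hiff.mpr h') (asymm hv)
          · exact absurd (τ.injective h') (ne_of_lt hab)
          · exact h'
        | tail _ hst ih =>
          obtain ⟨hab, hnab, hv⟩ := hst
          have hiff := hagree _ _ hab hnab
          rcases lt_trichotomy (τ _) (τ _) with h' | h' | h'
          · exact absurd (hiff.mpr h') (asymm hv)
          · exact absurd (τ.injective h') (ne_of_lt hab)
          · exact lt_trans h' ih
      exact this p.1 p.2 hcl
    · -- invSet τ⁻¹ ⊆ invSet ω⁻¹
      intro p hp
      rw [invSet_inv_mem] at hp ⊢
      obtain ⟨h1, h2⟩ := hp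
      refine ⟨h1, (hωinv p.1 p.2 h1).mpr ?_⟩
      intro hcl
      -- cl k vH i j → τ i < τ j, contradicting h2
      have : ∀ a b : Fin n, cl k vH a b → τ a < τ b := by
        intro a b h
        induction h with
        | single h =>
          obtain ⟨hab, hnab, hv⟩ := h
          exact (hagree a _ hab hnab).mp hv
        | tail _ hst ih =>
          obtain ⟨hab, hnab, hv⟩ := hst
          exact lt_trans ih ((hagree _ _ hab hnab).mp hv)
      exact asymm h2 (this p.1 p.2 hcl)
  · -- sandwich implies class membership
    rintro ⟨hlo, hhi⟩
    apply (DC_eq_iff σ τ hk1).mpr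
    intro i j hij hnear
    rcases lt_trichotomy (σ i) (σ j) with h' | h' | h'
    · simp only [h', true_iff]
      rcases lt_trichotomy (τ i) (τ j) with h'' | h'' | h''
      · exact h''
      · exact absurd (τ.injective h'') (ne_of_lt hij)
      · exfalso
        have hmem : (i, j) ∈ invSet τ⁻¹ := (invSet_inv_mem τ (i, j)).mpr ⟨hij, h''⟩
        have := (invSet_inv_mem ω (i, j)).mp (hhi hmem)
        exact ((hωinv i j hij).mp this.2) (Relation.TransGen.single ⟨hij, hnear, h'⟩)
    · exact absurd (σ.injective h') (ne_of_lt hij)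
    · have hcl : cl k vL i j := Relation.TransGen.single ⟨hij, hnear, h'⟩
      have hmem : (i, j) ∈ invSet α⁻¹ :=
        (invSet_inv_mem α (i, j)).mpr ⟨hij, (hαinv i j hij).mpr hcl⟩
      have hτ2 := ((invSet_inv_mem τ (i, j)).mp (hlo hmem)).2
      constructor
      · intro h
        exact absurd h (asymm h')
      · intro h
        exact absurd h (asymm hτ2)
end

section
/- Let k ≥ 2 and n ≥ 0, and let ω ∈ S_n be k-maximal. Then the order ideal {x ∈ S_n : Inv(x) ⊆ Inv(ω)} of the right weak order is a union of ≡_k classes: for all x, y ∈ S_n, if Inv(x) ⊆ Inv(ω) and y ≡_k x, then Inv(y) ⊆ Inv(ω). -/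
lemma exists_between_aux {k n : ℕ} (ω : Equiv.Perm (Fin n)) (hω : kMaximal k ω)
    (a b : Fin n) (hab : a < b) (hgap : (a : ℕ) + k ≤ (b : ℕ))
    (hpos : ω.symm a < ω.symm b) :
    ∃ c : Fin n, a < c ∧ c < b ∧ ω.symm a < ω.symm c ∧ ω.symm c < ω.symm b := by
  by_contra hc
  push_neg at hc
  set p := ω.symm a with hp
  set q := ω.symm b with hq
  have hωp : ω p = a := ω.apply_symm_apply a
  have hωq : ω q = b := ω.apply_symm_apply b
  -- every position strictly between p and q has value ≤ a or ≥ b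
  have hmid : ∀ i : Fin n, p < i → i < q → (ω i : ℕ) ≤ a ∨ (b : ℕ) ≤ ω i := by
    intro i hpi hiq
    by_contra hmi
    push_neg at hmi
    have hac : a < ω i := by
      have : (a : ℕ) < ω i := hmi.1
      exact this
    have hcb : ω i < b := by
      have : (ω i : ℕ) < b := hmi.2
      exact this
    have hsy : ω.symm (ω i) = i := ω.symm_apply_apply i
    have h1 : ω.symm a < ω.symm (ω i) := by rw [hsy]; exact hpi
    have h2 := hc (ω i) hac hcb h1
    rw [hsy] at h2
    exact absurd hiq (not_lt.mpr h2)
  -- take the largest position i0 in [p, q) with value ≤ a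
  classical
  set T : Finset (Fin n) :=
    Finset.univ.filter (fun i : Fin n => p ≤ i ∧ i < q ∧ (ω i : ℕ) ≤ a) with hT
  have hpT : p ∈ T := by
    simp only [hT, Finset.mem_filter, Finset.mem_univ, true_and]
    exact ⟨le_refl p, hpos, by rw [hωp]⟩
  have hTne : T.Nonempty := ⟨p, hpT⟩
  set i0 : Fin n := T.max' hTne with hi0
  have hi0T : i0 ∈ T := T.max'_mem hTne
  simp only [hT, Finset.mem_filter, Finset.mem_univ, true_and] at hi0T
  obtain ⟨hpi0, hi0q, hvi0⟩ := hi0T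
  have hi0n : (i0 : ℕ) + 1 < n := by
    have h1 : (i0 : ℕ) < q := hi0q
    have h2 : (q : ℕ) < n := q.isLt
    omega
  set i1 : Fin n := ⟨(i0 : ℕ) + 1, hi0n⟩ with hi1
  have hi0i1 : i0 < i1 := by
    simp only [hi1, Fin.lt_def]; omega
  have hi1q : i1 ≤ q := by
    have : (i0 : ℕ) < q := hi0q
    simp only [hi1, Fin.le_def]; omega
  -- value at i1 is ≥ b
  have hvb : (b : ℕ) ≤ ω i1 := by
    rcases eq_or_lt_of_le hi1q with heq | hlt
    · rw [heq, hωq]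
    · rcases hmid i1 (lt_of_le_of_lt hpi0 hi0i1) hlt with hle | hge
      · -- i1 ∈ T, contradicting maximality of i0
        have : i1 ∈ T := by
          simp only [hT, Finset.mem_filter, Finset.mem_univ, true_and]
          exact ⟨le_of_lt (lt_of_le_of_lt hpi0 hi0i1), hlt, hle⟩
        have := T.le_max' i1 this
        exact absurd this (not_le.mpr hi0i1)
      · exact hge
  -- contradiction with k-maximality
  apply hω
  refine ⟨(i0 : ℕ), hi0n, ?_⟩
  have e0 : (⟨(i0 : ℕ), Nat.lt_of_succ_lt hi0n⟩ : Fin n) = i0 := by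
    apply Fin.ext; rfl
  have e1 : (⟨(i0 : ℕ) + 1, hi0n⟩ : Fin n) = i1 := rfl
  rw [e0, e1]
  omega

lemma key_aux {k n : ℕ} (hk : 2 ≤ k) (ω x y : Equiv.Perm (Fin n)) (hω : kMaximal k ω)
    (hx : invSet x ⊆ invSet ω) (hyx : recoilEquiv k n y x) :
    ∀ d : ℕ, ∀ a b : Fin n, a < b → (b : ℕ) - a ≤ d →
      y.symm b < y.symm a → ω.symm b < ω.symm a := by
  intro d
  induction d using Nat.strong_induction_on with
  | _ d IH =>
    intro a b hab hd hinv
    have habn : (a : ℕ) < b := hab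
    by_cases hsmall : (b : ℕ) - a < k
    · have h := hyx a b habn hsmall
      have hxy : x.symm b < x.symm a := by
        rcases lt_trichotomy (x.symm a) (x.symm b) with h1 | h1 | h1
        · exact absurd (h.mpr h1) (not_lt.mpr hinv.le)
        · exact absurd (x.symm.injective h1) (ne_of_lt hab)
        · exact h1
      exact (hx (show (a, b) ∈ invSet x from ⟨hab, hxy⟩)).2
    · push_neg at hsmall
      by_contra hcon
      have hne : ω.symm a ≠ ω.symm b := fun h => ne_of_lt hab (ω.symm.injective h)
      have hpos : ω.symm a < ω.symm b := by
        rcases lt_trichotomy (ω.symm a) (ω.symm b) with h1 | h1 | h1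
        · exact h1
        · exact absurd h1 hne
        · exact absurd h1 hcon
      obtain ⟨c, hac, hcb, h1, h2⟩ :=
        exists_between_aux ω hω a b hab (by omega) hpos
      have hacn : (a : ℕ) < c := hac
      have hcbn : (c : ℕ) < b := hcb
      rcases lt_or_ge (y.symm c) (y.symm a) with hy | hy
      · have := IH ((c : ℕ) - a) (by omega) a c hac le_rfl hy
        exact absurd this (not_lt.mpr h1.le)
      · have hy2 : y.symm b < y.symm c := lt_of_lt_of_le hinv hy
        have := IH ((b : ℕ) - c) (by omega) c b hcb le_rfl hy2
        exact absurd this (not_lt.mpr h2.le)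

/-- for a `k`-maximal `ω`, the order ideal
`{x : Inv(x) ⊆ Inv(ω)}` of the right weak order is a union of `≡_k` classes. -/
theorem ideal_of_kMaximal_union_of_classes (k n : ℕ) (hk : 2 ≤ k)
    (ω : Equiv.Perm (Fin n)) (hω : kMaximal k ω)
    (x y : Equiv.Perm (Fin n)) (hx : invSet x ⊆ invSet ω)
    (hyx : recoilEquiv k n y x) :
    invSet y ⊆ invSet ω := by
  rintro ⟨a, b⟩ ⟨hab, hinv⟩
  exact ⟨hab, key_aux hk ω x y hω hx hyx ((b : ℕ) - a) a b hab le_rfl hinv⟩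
end

section
/- Let k ≥ 2 and n ≥ 0, and let α ∈ S_n be k-minimal. Then the order filter {x ∈ S_n : Inv(α) ⊆ Inv(x)} of the right weak order is a union of ≡_k classes: for all x, y ∈ S_n, if Inv(α) ⊆ Inv(x) and y ≡_k x, then Inv(α) ⊆ Inv(y). -/
/-- for a `k`-minimal `α`, the order filter
`{x : Inv(α) ⊆ Inv(x)}` of the right weak order is a union of `≡_k` classes. -/
theorem filter_of_kMinimal_union_of_classes (k n : ℕ) (hk : 2 ≤ k)
    (α : Equiv.Perm (Fin n)) (hα : kMinimal k α)
    (x y : Equiv.Perm (Fin n)) (hx : invSet α ⊆ invSet x)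
    (hyx : recoilEquiv k n y x) :
    invSet α ⊆ invSet y := by
  suffices h : ∀ d : ℕ, ∀ a b : Fin n, (b : ℕ) - a ≤ d → a < b →
      α.symm b < α.symm a → y.symm b < y.symm a by
    rintro ⟨a, b⟩ ⟨h1, h2⟩
    exact ⟨h1, h ((b : ℕ) - a) a b le_rfl h1 h2⟩
  intro d
  induction d using Nat.strong_induction_on with
  | _ d ih =>
    intro a b hd hab hinv
    by_cases hlt : (b : ℕ) - a < k
    · -- base case: use the recoil equivalence
      have hxinv : x.symm b < x.symm a := (hx (show (a, b) ∈ invSet α from ⟨hab, hinv⟩)).2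
      have hiff := hyx a b hab hlt
      have hne : a ≠ b := ne_of_lt hab
      have hxne : x.symm a ≠ x.symm b := fun h => hne (x.symm.injective h)
      have : ¬ y.symm a < y.symm b := by
        rw [hiff]; exact not_lt.mpr (le_of_lt hxinv)
      have hyne : y.symm b ≠ y.symm a := fun h => hne (y.symm.injective h.symm)
      exact lt_of_le_of_ne (not_lt.mp this) hyne
    · -- inductive step: find intermediate value c
      push_neg at hlt
      have hab' : (a : ℕ) < b := hab
      have hkab : (a : ℕ) + k ≤ b := by omega
      set p := α.symm b with hp
      set q := α.symm a with hq
      have hpq : p < q := hinv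
      have hαp : α p = b := α.apply_symm_apply b
      have hαq : α q = a := α.apply_symm_apply a
      set s := (Finset.Icc p q).filter (fun i => b ≤ α i) with hs
      have hps : p ∈ s := by
        simp [hs, Finset.mem_filter, Finset.mem_Icc, le_of_lt hpq, hαp]
      have hsne : s.Nonempty := ⟨p, hps⟩
      set i := s.max' hsne with hi
      have his : i ∈ s := s.max'_mem hsne
      obtain ⟨hiIcc, hbi⟩ := Finset.mem_filter.mp his
      obtain ⟨hpi, hiq⟩ := Finset.mem_Icc.mp hiIcc
      have hiq' : i < q := by
        rcases lt_or_eq_of_le hiq with h | h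
        · exact h
        · exfalso; rw [h, hαq] at hbi; exact absurd (lt_of_lt_of_le hab hbi) (lt_irrefl _)
      have hi1 : (i : ℕ) + 1 < n := by
        have := hiq'
        have hqn : (q : ℕ) < n := q.isLt
        omega
      set i' : Fin n := ⟨(i : ℕ) + 1, hi1⟩ with hi'
      have hii' : i < i' := by simp [hi', Fin.lt_def]
      have hi'q : i' ≤ q := by
        simp only [hi', Fin.le_def]
        exact hiq'
      have hi'notin : i' ∉ s := by
        intro hmem
        have := s.le_max' i' hmem
        rw [← hi] at this
        exact absurd (lt_of_lt_of_le hii' this) (lt_irrefl _)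
      have hci'b : α i' < b := by
        by_contra hcon
        push_neg at hcon
        exact hi'notin (Finset.mem_filter.mpr ⟨Finset.mem_Icc.mpr ⟨le_trans hpi (le_of_lt hii'), hi'q⟩, hcon⟩)
      have haci' : a < α i' := by
        by_contra hcon
        push_neg at hcon
        apply hα
        refine ⟨(i : ℕ), hi1, ?_⟩
        have h1 : α ⟨(i : ℕ) + 1, hi1⟩ = α i' := rfl
        have h2 : α ⟨(i : ℕ), Nat.lt_of_succ_lt hi1⟩ = α i := by
          congr 1
        rw [h1, h2]
        have : (α i' : ℕ) ≤ a := hcon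
        have : (b : ℕ) ≤ α i := hbi
        omega
      set c := α i' with hc
      have hsc : α.symm c = i' := α.symm_apply_apply i'
      have hci'q : i' < q := by
        rcases lt_or_eq_of_le hi'q with h | h
        · exact h
        · exfalso
          have : c = a := by rw [hc, h, hαq]
          rw [this] at haci'
          exact absurd haci' (lt_irrefl _)
      -- inversions (a,c) and (c,b) for α
      have hinv1 : α.symm c < α.symm a := by rw [hsc, ← hq]; exact hci'q
      have hinv2 : α.symm b < α.symm c := by rw [hsc, ← hp]; exact lt_of_le_of_lt hpi hii'
      have hd2 : 2 ≤ (b : ℕ) - a := by omega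
      have hd1 : d - 1 < d := by omega
      have g1 : (c : ℕ) - a ≤ d - 1 := by
        have : (c : ℕ) < b := hci'b
        omega
      have g2 : (b : ℕ) - c ≤ d - 1 := by
        have : (a : ℕ) < c := haci'
        omega
      have r1 := ih (d - 1) hd1 a c g1 haci' hinv1
      have r2 := ih (d - 1) hd1 c b g2 hci'b hinv2
      exact lt_trans r2 r1
end

section
/- For every integer k ≥ 2 and every n ≥ 0, the number of k-minimal permutations in S_n equals n! if n ≤ k, and equals k!·k^(n−k) if n ≥ k. -/
section NumKMinimalProof

open Equiv Finset
open scoped Classical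

/-- Insertion of the top value `Fin.last n` at position `p` into the word of `τ`. -/
def insTop {n : ℕ} (τ : Equiv.Perm (Fin n)) (p : Fin (n + 1)) : Equiv.Perm (Fin (n + 1)) :=
  (finSuccEquiv' p).trans ((τ.optionCongr).trans (finSuccEquiv' (Fin.last n)).symm)

lemma insTop_apply_self {n : ℕ} (τ : Equiv.Perm (Fin n)) (p : Fin (n+1)) :
    insTop τ p p = Fin.last n := by
  simp [insTop]

lemma insTop_apply_succAbove {n : ℕ} (τ : Equiv.Perm (Fin n)) (p : Fin (n+1)) (j : Fin n) :
    insTop τ p (p.succAbove j) = (τ j).castSucc := by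
  simp [insTop, Fin.succAbove_last]

lemma insTop_apply_of_lt {n : ℕ} (τ : Equiv.Perm (Fin n)) (p : Fin (n+1)) {i : ℕ}
    (hip : i < (p : ℕ)) (h : i < n + 1) (hin : i < n) :
    insTop τ p ⟨i, h⟩ = (τ ⟨i, hin⟩).castSucc := by
  have he : (⟨i, h⟩ : Fin (n+1)) = p.succAbove ⟨i, hin⟩ := by
    rw [Fin.succAbove_of_castSucc_lt]
    · rfl
    · simpa [Fin.lt_def] using hip
  rw [he, insTop_apply_succAbove]

lemma insTop_apply_of_gt {n : ℕ} (τ : Equiv.Perm (Fin n)) (p : Fin (n+1)) {i : ℕ}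
    (hpi : (p : ℕ) < i) (h : i < n + 1) (hin : i - 1 < n) :
    insTop τ p ⟨i, h⟩ = (τ ⟨i - 1, hin⟩).castSucc := by
  have he : (⟨i, h⟩ : Fin (n+1)) = p.succAbove ⟨i - 1, hin⟩ := by
    rw [Fin.succAbove_of_le_castSucc]
    · ext; simp [Fin.succ]; omega
    · simp [Fin.le_def]; omega
  rw [he, insTop_apply_succAbove]

lemma insTop_symm_last {n : ℕ} (τ : Equiv.Perm (Fin n)) (p : Fin (n+1)) :
    (insTop τ p).symm (Fin.last n) = p := by
  rw [Equiv.symm_apply_eq, insTop_apply_self]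

lemma insTop_injective {n : ℕ} :
    Function.Injective (fun x : Equiv.Perm (Fin n) × Fin (n + 1) => insTop x.1 x.2) := by
  rintro ⟨τ, p⟩ ⟨τ', p'⟩ h
  simp only at h
  have hp : p = p' := by
    have := congrArg (fun e : Equiv.Perm (Fin (n+1)) => e.symm (Fin.last n)) h
    simpa [insTop_symm_last] using this
  subst hp
  have hτ : τ = τ' := by
    ext j
    have := congrArg (fun e : Equiv.Perm (Fin (n+1)) => e (p.succAbove j)) h
    simp only [insTop_apply_succAbove] at this
    exact congrArg Fin.val (Fin.castSucc_inj.mp this)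
  rw [hτ]

lemma insTop_bijective {n : ℕ} :
    Function.Bijective (fun x : Equiv.Perm (Fin n) × Fin (n + 1) => insTop x.1 x.2) := by
  rw [Fintype.bijective_iff_injective_and_card]
  refine ⟨insTop_injective, ?_⟩
  simp [Fintype.card_perm, Nat.factorial_succ, Nat.mul_comm]

lemma kMinimal_iff {k n : ℕ} (σ : Equiv.Perm (Fin n)) :
    kMinimal k σ ↔ ∀ (i : ℕ) (h : i + 1 < n),
      (σ ⟨i, Nat.lt_of_succ_lt h⟩ : ℕ) < (σ ⟨i + 1, h⟩ : ℕ) + k := by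
  unfold kMinimal
  push_neg
  rfl

/-- The positions at which the top value may be inserted. -/
def allowedPos (k : ℕ) {n : ℕ} (τ : Equiv.Perm (Fin n)) (p : Fin (n + 1)) : Prop :=
  (p : ℕ) = n ∨ ∃ h : (p : ℕ) < n, n < (τ ⟨(p : ℕ), h⟩ : ℕ) + k

lemma kMinimal_insTop_iff {k n : ℕ} (τ : Equiv.Perm (Fin n)) (p : Fin (n + 1)) :
    kMinimal k (insTop τ p) ↔ kMinimal k τ ∧ allowedPos k τ p := by
  have hpn : (p : ℕ) ≤ n := Nat.lt_succ_iff.mp p.is_lt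
  rw [kMinimal_iff, kMinimal_iff]
  constructor
  · intro H
    constructor
    · intro j hj
      rcases lt_trichotomy (j + 1) (p : ℕ) with hlt | heq | hgt
      · have := H j (by omega)
        rwa [insTop_apply_of_lt τ p (by omega) (by omega) (by omega),
          insTop_apply_of_lt τ p hlt (by omega) hj, Fin.coe_castSucc, Fin.coe_castSucc] at this
      · have := H (j + 1) (by omega)
        rw [show (⟨j+1, by omega⟩ : Fin (n+1)) = p from Fin.ext heq] at this
        rw [insTop_apply_self, insTop_apply_of_gt τ p (by omega) (by omega) (by omega)] at this
        have h2 : j + 1 + 1 - 1 = j + 1 := by omega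
        simp only [h2] at this
        have := (τ ⟨j, by omega⟩).is_lt
        simp only [Fin.coe_castSucc, Fin.val_last] at *
        omega
      · have := H (j + 1) (by omega)
        rw [insTop_apply_of_gt τ p hgt (by omega) (by omega),
          insTop_apply_of_gt τ p (by omega) (by omega) (by omega)] at this
        have h1 : j + 1 - 1 = j := by omega
        have h2 : j + 1 + 1 - 1 = j + 1 := by omega
        simp only [h1, h2, Fin.coe_castSucc] at this
        exact this
    · by_cases hlast : (p : ℕ) = n
      · exact Or.inl hlast
      · refine Or.inr ⟨by omega, ?_⟩
        have := H (p : ℕ) (by omega)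
        rw [show (⟨(p:ℕ), by omega⟩ : Fin (n+1)) = p from Fin.ext rfl] at this
        rw [insTop_apply_self, insTop_apply_of_gt τ p (by omega) (by omega) (by omega)] at this
        have h2 : (p : ℕ) + 1 - 1 = (p : ℕ) := by omega
        simp only [h2, Fin.coe_castSucc, Fin.val_last] at this
        exact this
  · rintro ⟨Hτ, Hp⟩ i hi
    rcases lt_trichotomy (i + 1) (p : ℕ) with hlt | heq | hgt
    · rw [insTop_apply_of_lt τ p (by omega) (by omega) (by omega),
        insTop_apply_of_lt τ p hlt hi (by omega), Fin.coe_castSucc, Fin.coe_castSucc]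
      exact Hτ i (by omega)
    · rw [show (⟨i+1, hi⟩ : Fin (n+1)) = p from Fin.ext heq, insTop_apply_self,
        insTop_apply_of_lt τ p (by omega) (by omega) (by omega)]
      have := (τ ⟨i, by omega⟩).is_lt
      simp only [Fin.coe_castSucc, Fin.val_last]
      omega
    · by_cases hip : (p : ℕ) = i
      · rw [show (⟨i, Nat.lt_of_succ_lt hi⟩ : Fin (n+1)) = p from Fin.ext hip.symm,
          insTop_apply_self, insTop_apply_of_gt τ p (by omega) hi (by omega)]
        have h2 : i + 1 - 1 = i := by omega
        simp only [h2, Fin.coe_castSucc, Fin.val_last]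
        rcases Hp with h | ⟨h, hv⟩
        · omega
        · have : (⟨(p:ℕ), h⟩ : Fin n) = ⟨i, by omega⟩ := Fin.ext hip
          rw [this] at hv; exact hv
      · have hpi : (p : ℕ) < i := by omega
        rw [insTop_apply_of_gt τ p hpi (by omega) (by omega),
          insTop_apply_of_gt τ p (by omega) hi (by omega)]
        have h2 : i + 1 - 1 = i := by omega
        simp only [h2, Fin.coe_castSucc]
        have := Hτ (i - 1) (by omega)
        have h3 : i - 1 + 1 = i := by omega
        simp only [h3] at this
        exact this

lemma card_allowedPos {k n : ℕ} (hk : 1 ≤ k) (hkn : k ≤ n) (τ : Equiv.Perm (Fin n)) :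
    (Finset.univ.filter fun p : Fin (n + 1) => allowedPos k τ p).card = k := by
  have hs : (Finset.univ.filter fun p : Fin (n + 1) => allowedPos k τ p) =
      insert (Fin.last n)
        ((Finset.univ.filter fun j : Fin n => n < (τ j : ℕ) + k).image Fin.castSucc) := by
    ext p
    simp only [Finset.mem_filter, Finset.mem_univ, true_and, Finset.mem_insert,
      Finset.mem_image]
    simp only [allowedPos]
    constructor
    · rintro (h | ⟨h, hv⟩)
      · exact Or.inl (Fin.ext (by simpa using h))
      · exact Or.inr ⟨⟨(p : ℕ), h⟩, hv, Fin.ext rfl⟩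
    · rintro (rfl | ⟨j, hj, rfl⟩)
      · exact Or.inl (by simp)
      · refine Or.inr ⟨by simpa using j.is_lt, ?_⟩
        have : (⟨((j.castSucc : Fin (n+1)) : ℕ), by simpa using j.is_lt⟩ : Fin n) = j :=
          Fin.ext (by simp)
        rw [this]; exact hj
  rw [hs, Finset.card_insert_of_notMem,
    Finset.card_image_of_injective _ (Fin.castSucc_injective n)]
  · have h1 : (Finset.univ.filter fun j : Fin n => n < (τ j : ℕ) + k).card =
        (Finset.univ.filter fun v : Fin n => n < (v : ℕ) + k).card := by
      refine Finset.card_bij (fun j _ => τ j) ?_ ?_ ?_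
      · intro a ha
        simp only [Finset.mem_filter, Finset.mem_univ, true_and] at ha ⊢
        exact ha
      · intro a _ b _ h; exact τ.injective h
      · intro v hv
        refine ⟨τ.symm v, ?_, by simp⟩
        simp only [Finset.mem_filter, Finset.mem_univ, true_and] at *
        simpa using hv
    have h2 : (Finset.univ.filter fun v : Fin n => n < (v : ℕ) + k).card =
        (Finset.Ico (n + 1 - k) n).card := by
      refine Finset.card_bij' (fun v _ => (v : ℕ)) (fun m hm => ⟨m, (Finset.mem_Ico.mp hm).2⟩)
        ?_ ?_ ?_ ?_
      · intro v hv
        simp only [Finset.mem_filter, Finset.mem_univ, true_and] at hv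
        simp only [Finset.mem_Ico]
        exact ⟨by omega, v.is_lt⟩
      · intro m hm
        simp only [Finset.mem_Ico] at hm
        simp only [Finset.mem_filter, Finset.mem_univ, true_and]
        omega
      · intro v _; rfl
      · intro m _; rfl
    rw [h1, h2, Nat.card_Ico]
    omega
  · simp only [Finset.mem_image, Finset.mem_filter]
    rintro ⟨j, _, hj⟩
    have := j.is_lt
    have := congrArg Fin.val hj
    simp at this
    omega

lemma all_kMinimal {k n : ℕ} (hnk : n ≤ k) (σ : Equiv.Perm (Fin n)) : kMinimal k σ := by
  rw [kMinimal_iff]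
  intro i h
  have h1 := (σ ⟨i, Nat.lt_of_succ_lt h⟩).is_lt
  omega

lemma card_kMinimal_of_le {k n : ℕ} (hnk : n ≤ k) :
    Nat.card {σ : Equiv.Perm (Fin n) // kMinimal k σ} = Nat.factorial n := by
  rw [Nat.card_congr (Equiv.subtypeUnivEquiv (all_kMinimal hnk)), Nat.card_eq_fintype_card]
  simp [Fintype.card_perm]

lemma card_kMinimal_step {k n : ℕ} (hk : 1 ≤ k) (hkn : k ≤ n) :
    Nat.card {σ : Equiv.Perm (Fin (n+1)) // kMinimal k σ} =
      k * Nat.card {σ : Equiv.Perm (Fin n) // kMinimal k σ} := by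
  have e1 : {x : Equiv.Perm (Fin n) × Fin (n+1) // kMinimal k x.1 ∧ allowedPos k x.1 x.2}
      ≃ {σ : Equiv.Perm (Fin (n+1)) // kMinimal k σ} :=
    (Equiv.ofBijective _ insTop_bijective).subtypeEquiv
      (fun x => (kMinimal_insTop_iff x.1 x.2).symm)
  rw [← Nat.card_congr e1, Nat.card_eq_fintype_card, Fintype.card_subtype]
  rw [Finset.card_eq_sum_card_fiberwise (f := Prod.fst)
    (t := Finset.univ.filter fun τ : Equiv.Perm (Fin n) => kMinimal k τ)
    (fun x hx => by
      simp only [Finset.coe_filter, Finset.mem_coe, Finset.mem_filter, Finset.mem_univ, true_and] at hx ⊢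
      exact hx.1)]
  have hfib : ∀ τ ∈ Finset.univ.filter fun τ : Equiv.Perm (Fin n) => kMinimal k τ,
      ((Finset.univ.filter fun x : Equiv.Perm (Fin n) × Fin (n+1) =>
        kMinimal k x.1 ∧ allowedPos k x.1 x.2).filter fun x => x.1 = τ).card = k := by
    intro τ hτ
    simp only [Finset.mem_filter, Finset.mem_univ, true_and] at hτ
    have hset : ((Finset.univ.filter fun x : Equiv.Perm (Fin n) × Fin (n+1) =>
        kMinimal k x.1 ∧ allowedPos k x.1 x.2).filter fun x => x.1 = τ) =
        {τ} ×ˢ (Finset.univ.filter fun p => allowedPos k τ p) := by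
      ext ⟨σ, p⟩
      simp only [Finset.mem_filter, Finset.mem_univ, true_and, Finset.mem_product,
        Finset.mem_singleton]
      constructor
      · rintro ⟨⟨h1, h2⟩, rfl⟩; exact ⟨rfl, h2⟩
      · rintro ⟨rfl, h2⟩; exact ⟨⟨hτ, h2⟩, rfl⟩
    rw [hset, Finset.card_product, Finset.card_singleton, one_mul, card_allowedPos hk hkn]
  rw [Finset.sum_congr rfl hfib, Finset.sum_const, smul_eq_mul,
    Nat.card_eq_fintype_card, Fintype.card_subtype, mul_comm]

end NumKMinimalProof

/-- the number of `k`-minimal permutations in `S_n` is `n!` if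
`n ≤ k` and `k! · k^(n-k)` if `n ≥ k`. -/
theorem num_kMinimal (k n : ℕ) (hk : 2 ≤ k) :
    (n ≤ k → Nat.card {σ : Equiv.Perm (Fin n) // kMinimal k σ} =
      Nat.factorial n) ∧
    (k ≤ n → Nat.card {σ : Equiv.Perm (Fin n) // kMinimal k σ} =
      Nat.factorial k * k ^ (n - k)) := by
  constructor
  · exact fun h => card_kMinimal_of_le h
  · intro hkn
    induction n, hkn using Nat.le_induction with
    | base => simp [card_kMinimal_of_le (le_refl k)]
    | succ n hn ih =>
      rw [card_kMinimal_step (by omega) hn, ih]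
      have h1 : n + 1 - k = (n - k) + 1 := by omega
      rw [h1, pow_succ]
      ring
end
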